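/- arXiv:1411.4855 — 5 statements merged into one kernel-verified Lean document; each statement's English description precedes it below -/
import Mathlib

section
/- If C is a σ-sparse Cantor subset of ℝ and φ is a C¹ diffeomorphism of ℝ preserving C with φ(a) = a for some a ∈ C, and φ is 1-flat at a (i.e. φ(x) − x = o(x − a) as x → a), then the restriction of φ to C is the identity in some neighborhood of a. -/
open Set Filter Topology Asymptotics

/-- A Cantor subset of the reals: nonempty, compact, perfect, totally disconnected. -/
def IsCantorSet (C : Set ℝ) : Prop :=
  C.Nonempty ∧ IsCompact C ∧ Perfect C ∧ IsTotallyDisconnected C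

/-- `C` is `σ`-sparse: any two points of `C` bound a complementary open interval of
relative length at least `σ`. -/
def SparseSet (σ : ℝ) (C : Set ℝ) : Prop :=
  ∀ a ∈ C, ∀ b ∈ C, a < b →
    ∃ α β : ℝ, a ≤ α ∧ α < β ∧ β ≤ b ∧ Set.Ioo α β ∩ C = ∅ ∧ σ * (b - a) ≤ β - α

/-- `φ` is a `C¹` diffeomorphism of `ℝ` with inverse `ψ`. -/
def IsC1DiffeoPair (φ ψ : ℝ → ℝ) : Prop :=
  ContDiff ℝ 1 φ ∧ ContDiff ℝ 1 ψ ∧ Function.LeftInverse ψ φ ∧ Function.RightInverse ψ φ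

lemma sparse_aux (σ : ℝ) (hσ : 0 < σ) (C : Set ℝ) (hC : IsClosed C) (hsp : SparseSet σ C)
    (φ : ℝ → ℝ) (hcont : Continuous φ) (hmono : StrictMono φ)
    (hfwd : ∀ y ∈ C, φ y ∈ C) (hbwd : ∀ y ∈ C, ∃ u ∈ C, φ u = y)
    (a b : ℝ) (ha : a ∈ C) (hfix : φ a = a)
    (hquasi : ∀ p q : ℝ, a ≤ p → p ≤ q → q ≤ b → |φ q - (φ p + (q - p))| ≤ σ / 2 * (q - p)) :
    ∀ x ∈ C, a ≤ x → x ≤ b → φ x = x := by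
  intro x hx hax hxb
  set S : Set ℝ := (C ∩ Icc a x) ∩ {p | φ p = p} with hSdef
  have hScl : IsClosed S := (hC.inter isClosed_Icc).inter (isClosed_eq hcont continuous_id)
  have hScomp : IsCompact S :=
    IsCompact.of_isClosed_subset isCompact_Icc hScl fun t ht => ht.1.2
  have hSne : S.Nonempty := ⟨a, ⟨⟨ha, le_rfl, hax⟩, hfix⟩⟩
  have hpS := hScomp.sSup_mem hSne
  set p := sSup S with hp
  obtain ⟨⟨hpC, hpa, hpx⟩, hpfix⟩ := hpS
  rcases eq_or_lt_of_le hpx with h | hlt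
  · rw [← h]; exact hpfix
  exfalso
  obtain ⟨α, β, hpα, hαβ, hβx, hgap, hlen⟩ := hsp p hpC x hx hlt
  set T₁ : Set ℝ := C ∩ Icc p α with hT₁
  set T₂ : Set ℝ := C ∩ Icc β x with hT₂
  have hT₁comp : IsCompact T₁ :=
    IsCompact.of_isClosed_subset isCompact_Icc (hC.inter isClosed_Icc) fun t ht => ht.2
  have hT₂comp : IsCompact T₂ :=
    IsCompact.of_isClosed_subset isCompact_Icc (hC.inter isClosed_Icc) fun t ht => ht.2
  have hT₁ne : T₁.Nonempty := ⟨p, hpC, le_rfl, hpα⟩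
  have hT₂ne : T₂.Nonempty := ⟨x, hx, hβx, le_rfl⟩
  set g₁ := sSup T₁ with hg₁def
  set g₂ := sInf T₂ with hg₂def
  obtain ⟨hg₁C, hpg₁, hg₁α⟩ := hT₁comp.sSup_mem hT₁ne
  obtain ⟨hg₂C, hβg₂, hg₂x⟩ := hT₂comp.sInf_mem hT₂ne
  have hg₁g₂ : g₁ < g₂ := lt_of_le_of_lt hg₁α (lt_of_lt_of_le hαβ hβg₂)
  -- no point of C strictly between g₁ and g₂
  have hnogap : ∀ c ∈ C, g₁ < c → c < g₂ → False := by
    intro c hc hcg₁ hcg₂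
    rcases le_or_gt c α with h1 | h1
    · have : c ∈ T₁ := ⟨hc, le_of_lt (lt_of_le_of_lt hpg₁ hcg₁), h1⟩
      exact absurd (le_csSup hT₁comp.bddAbove this) (not_le.mpr hcg₁)
    rcases lt_or_ge c β with h2 | h2
    · have hm : c ∈ Ioo α β ∩ C := ⟨⟨h1, h2⟩, hc⟩
      rw [hgap] at hm
      exact hm
    · have : c ∈ T₂ := ⟨hc, h2, le_of_lt (lt_of_lt_of_le hcg₂ hg₂x)⟩
      exact absurd (csInf_le hT₂comp.bddBelow this) (not_le.mpr hcg₂)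
  have hglen : σ * (x - p) ≤ g₂ - g₁ := le_trans hlen (by linarith)
  have hhalf : σ / 2 * (x - p) < g₂ - g₁ := by nlinarith
  -- Step 1 : φ g₂ ≥ g₂
  have hq2 : |φ g₂ - g₂| ≤ σ / 2 * (x - p) := by
    have h := hquasi p g₂ hpa (le_trans (le_trans hpα (le_of_lt hαβ)) hβg₂)
      (le_trans hg₂x hxb)
    rw [hpfix] at h
    calc |φ g₂ - g₂| = |φ g₂ - (p + (g₂ - p))| := by ring_nf
      _ ≤ σ / 2 * (g₂ - p) := h
      _ ≤ σ / 2 * (x - p) := by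
          have : g₂ ≤ x := hg₂x
          nlinarith
  have hstep1 : g₂ ≤ φ g₂ := by
    have h1 : g₁ < φ g₂ := by
      have := abs_le.mp hq2
      linarith
    by_contra hcon
    exact hnogap (φ g₂) (hfwd g₂ hg₂C) h1 (not_le.mp hcon)
  -- Step 2 : φ g₂ ≤ g₂
  have hstep2 : φ g₂ ≤ g₂ := by
    obtain ⟨u, huC, huφ⟩ := hbwd g₂ hg₂C
    rcases le_or_gt g₂ u with h | h
    · calc φ g₂ ≤ φ u := hmono.le_iff_le.mpr h
        _ = g₂ := huφ
    · -- u < g₂, so u ≤ g₁ by the gap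
      have hug₁ : u ≤ g₁ := by
        by_contra hcon
        exact hnogap u huC (not_le.mp hcon) h
      rcases lt_or_ge u p with h2 | h2
      · have : φ u < φ p := hmono h2
        rw [huφ, hpfix] at this
        linarith [hg₁α, hpα, hβg₂, hαβ, hpg₁]
      · have hq := hquasi p u hpa h2 (by linarith [hg₁α, hpα, hβx, hxb] : u ≤ b)
        rw [hpfix, huφ] at hq
        have habs := abs_le.mp hq
        have hub : g₂ - u ≥ g₂ - g₁ := by linarith
        have : σ / 2 * (u - p) ≤ σ / 2 * (x - p) := by nlinarith
        linarith
  have hg₂fix : φ g₂ = g₂ := le_antisymm hstep2 hstep1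
  have : g₂ ∈ S := ⟨⟨hg₂C, le_trans hpa (le_of_lt (lt_of_le_of_lt hpg₁ hg₁g₂)), hg₂x⟩, hg₂fix⟩
  have := le_csSup hScomp.bddAbove this
  linarith [lt_of_le_of_lt hpg₁ hg₁g₂]

/-- If `C` is a σ-sparse Cantor set, `φ` a `C¹` diffeomorphism of ℝ preserving `C`
fixing `a ∈ C` and 1-flat at `a`, then `φ` is the identity on `C` near `a`. -/
theorem flat_diffeo_eq_id_near (σ : ℝ) (hσ : 0 < σ) (C : Set ℝ)
    (hC : IsCantorSet C) (hsp : SparseSet σ C)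
    (φ ψ : ℝ → ℝ) (hφ : IsC1DiffeoPair φ ψ) (hpres : φ '' C = C)
    (a : ℝ) (ha : a ∈ C) (hfix : φ a = a)
    (hflat : (fun x => φ x - x) =o[𝓝 a] fun x => x - a) :
    ∃ ε > 0, ∀ x ∈ C, |x - a| < ε → φ x = x := by
  obtain ⟨hφ1, hψ1, hLI, hRI⟩ := hφ
  have hCcl : IsClosed C := hC.2.1.isClosed
  have hdiff : Differentiable ℝ φ := hφ1.differentiable one_ne_zero
  have hψdiff : Differentiable ℝ ψ := hψ1.differentiable one_ne_zero
  have hcd : Continuous (deriv φ) := hφ1.continuous_deriv le_rfl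
  have hda : HasDerivAt φ 1 a := by
    rw [hasDerivAt_iff_isLittleO]
    have he : (fun x' => φ x' - φ a - (x' - a) • (1:ℝ)) = fun x => φ x - x := by
      funext t; rw [hfix, smul_eq_mul, mul_one]; ring
    rw [he]; exact hflat
  have hderiva : deriv φ a = 1 := hda.deriv
  have hne : ∀ t, deriv φ t ≠ 0 := by
    intro t h0
    have h1 : HasDerivAt (ψ ∘ φ) (deriv ψ (φ t) * deriv φ t) t :=
      ((hψdiff (φ t)).hasDerivAt).comp t ((hdiff t).hasDerivAt)
    have h2 : (ψ ∘ φ) = id := funext hLI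
    rw [h2] at h1
    have h3 := h1.unique (hasDerivAt_id t)
    rw [h0, mul_zero] at h3
    exact one_ne_zero h3.symm
  have hpos : ∀ t, 0 < deriv φ t := by
    intro t
    by_contra hcon
    push_neg at hcon
    have h0 : (0:ℝ) ∈ uIcc (deriv φ t) (deriv φ a) := by
      rw [hderiva]; exact Set.mem_uIcc.mpr (Or.inl ⟨hcon, zero_le_one⟩)
    obtain ⟨c, _, hc⟩ := intermediate_value_uIcc hcd.continuousOn h0
    exact hne c hc
  have hmono : StrictMono φ := strictMono_of_deriv_pos hpos
  obtain ⟨δ', hδ'pos, hδ'⟩ := Metric.continuousAt_iff.mp (hcd.continuousAt (x := a))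
    (σ / 2) (by linarith)
  set δ := δ' / 2 with hδdef
  have hδpos : 0 < δ := by positivity
  have hbound : ∀ t ∈ Icc (a - δ) (a + δ), ‖deriv φ t - 1‖ ≤ σ / 2 := by
    intro t ht
    have h1 : dist t a < δ' := by
      rw [Real.dist_eq, abs_lt]
      constructor <;> [linarith [ht.1]; linarith [ht.2]]
    have h2 := hδ' h1
    rw [hderiva, Real.dist_eq] at h2
    exact le_of_lt h2
  have hquasi : ∀ p q : ℝ, a - δ ≤ p → p ≤ q → q ≤ a + δ →
      |φ q - (φ p + (q - p))| ≤ σ / 2 * (q - p) := by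
    intro p q h1 h2 h3
    have hp : p ∈ Icc (a - δ) (a + δ) := ⟨h1, by linarith⟩
    have hq : q ∈ Icc (a - δ) (a + δ) := ⟨by linarith, h3⟩
    have key := Convex.norm_image_sub_le_of_norm_hasDerivWithin_le
      (f := fun t => φ t - t) (f' := fun t => deriv φ t - 1)
      (fun t _ => ((hdiff t).hasDerivAt.sub (hasDerivAt_id t)).hasDerivWithinAt)
      hbound (convex_Icc _ _) hp hq
    rw [Real.norm_eq_abs, Real.norm_eq_abs] at key
    have e1 : φ q - q - (φ p - p) = φ q - (φ p + (q - p)) := by ring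
    rw [e1] at key
    calc |φ q - (φ p + (q - p))| ≤ σ / 2 * |q - p| := key
      _ = σ / 2 * (q - p) := by rw [abs_of_nonneg (by linarith)]
  have hfwd : ∀ y ∈ C, φ y ∈ C := by
    intro y hy; rw [← hpres]; exact ⟨y, hy, rfl⟩
  have hbwd : ∀ y ∈ C, ∃ u ∈ C, φ u = y := by
    intro y hy; rw [← hpres] at hy; obtain ⟨u, hu, hu2⟩ := hy; exact ⟨u, hu, hu2⟩
  -- right side
  have hR := sparse_aux σ hσ C hCcl hsp φ hφ1.continuous hmono hfwd hbwd a (a + δ) ha hfix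
    (fun p q h1 h2 h3 => hquasi p q (by linarith) h2 h3)
  -- left side, mirrored
  set C' : Set ℝ := Neg.neg ⁻¹' C with hC'def
  have hC'cl : IsClosed C' := hCcl.preimage continuous_neg
  have hsp' : SparseSet σ C' := by
    intro a' ha' b' hb' hab
    obtain ⟨α, β, h1, h2, h3, h4, h5⟩ := hsp (-b') hb' (-a') ha' (by linarith)
    refine ⟨-β, -α, by linarith, by linarith, by linarith, ?_, by linarith⟩
    rw [Set.eq_empty_iff_forall_notMem]
    rintro t ⟨⟨ht1, ht2⟩, htC⟩
    have : -t ∈ Ioo α β ∩ C := ⟨⟨by linarith, by linarith⟩, htC⟩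
    rw [h4] at this
    exact this
  set φm : ℝ → ℝ := fun t => -φ (-t) with hφmdef
  have hφmc : Continuous φm := (hφ1.continuous.comp continuous_neg).neg
  have hφmmono : StrictMono φm := by
    intro s t hst
    have := hmono (neg_lt_neg hst)
    simp only [hφmdef]
    linarith
  have hfwd' : ∀ y ∈ C', φm y ∈ C' := by
    intro y hy
    have h : φ (-y) ∈ C := hfwd (-y) hy
    simp only [hC'def, Set.mem_preimage, hφmdef, neg_neg]
    exact h
  have hbwd' : ∀ y ∈ C', ∃ u ∈ C', φm u = y := by
    intro y hy
    obtain ⟨u, hu, hu2⟩ := hbwd (-y) hy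
    refine ⟨-u, by simp only [hC'def, Set.mem_preimage, neg_neg]; exact hu, ?_⟩
    simp only [hφmdef, neg_neg, hu2]
  have ha' : -a ∈ C' := by simp only [hC'def, Set.mem_preimage, neg_neg]; exact ha
  have hfix' : φm (-a) = -a := by simp only [hφmdef, neg_neg, hfix]
  have hquasi' : ∀ p q : ℝ, -a ≤ p → p ≤ q → q ≤ -a + δ →
      |φm q - (φm p + (q - p))| ≤ σ / 2 * (q - p) := by
    intro p q h1 h2 h3
    have key := hquasi (-q) (-p) (by linarith) (by linarith) (by linarith)
    have e1 : φm q - (φm p + (q - p)) = φ (-p) - (φ (-q) + (-p - -q)) := by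
      simp only [hφmdef]; ring
    have e2 : σ / 2 * (-p - -q) = σ / 2 * (q - p) := by ring
    rw [e1]
    rw [e2] at key
    exact key
  have hL := sparse_aux σ hσ C' hC'cl hsp' φm hφmc hφmmono hfwd' hbwd' (-a) (-a + δ) ha' hfix'
    hquasi'
  refine ⟨δ, hδpos, ?_⟩
  intro x hxC hxa
  obtain ⟨hx1, hx2⟩ := abs_lt.mp hxa
  rcases le_or_gt a x with hcase | hcase
  · exact hR x hxC hcase (by linarith)
  · have hx' : -x ∈ C' := by simp only [hC'def, Set.mem_preimage, neg_neg]; exact hxC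
    have := hL (-x) hx' (by linarith) (by linarith)
    simp only [hφmdef, neg_neg] at this
    linarith [neg_injective this]
end

section
/- If C is a σ-sparse Cantor subset of ℝ and φ is a C¹ diffeomorphism of ℝ preserving C with φ(a) = a for some a ∈ C, and φ is not 1-flat at a, then |φ'(a) − 1| ≥ σ. -/
open Set Filter Topology Asymptotics

set_option maxHeartbeats 1600000 in
/-- Core lemma: if `f` fixes `a ∈ C`, maps `C` into `C`, has derivative `μ ∈ (0,1)` at `a`,
`a` is an accumulation point of `C`, and `C` is `σ`-sparse, then `μ ≤ 1 - σ`. -/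
lemma sparse_core (σ : ℝ) (hσ : 0 < σ) (C : Set ℝ) (hcpt : IsCompact C)
    (hsp : SparseSet σ C) (f : ℝ → ℝ) (hf : ∀ x ∈ C, f x ∈ C) (a : ℝ) (ha : a ∈ C)
    (hacc : AccPt a (𝓟 C)) (hfix : f a = a) (μ : ℝ) (hder : HasDerivAt f μ a)
    (hμ0 : 0 < μ) (hμ1 : μ < 1) : μ ≤ 1 - σ := by
  by_contra hcon
  push_neg at hcon
  set ε : ℝ := min ((μ - (1 - σ)) / 2) ((1 - μ) / 2) with hε
  have hε0 : 0 < ε := lt_min (by linarith) (by linarith)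
  have hε1 : ε ≤ (μ - (1 - σ)) / 2 := min_le_left _ _
  have hε2 : ε ≤ (1 - μ) / 2 := min_le_right _ _
  -- derivative estimate
  have ho := (hasDerivAt_iff_isLittleO.mp hder).def hε0
  rw [Metric.eventually_nhds_iff] at ho
  obtain ⟨δ, hδ0, hδ⟩ := ho
  have hest : ∀ x : ℝ, |x - a| < δ → |f x - a - μ * (x - a)| ≤ ε * |x - a| := by
    intro x hx
    have := hδ (y := x) (by simpa [Real.dist_eq] using hx)
    simpa [Real.norm_eq_abs, hfix, smul_eq_mul, mul_comm] using this
  -- accumulation point: get b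
  obtain ⟨b, hbU, hbne⟩ := accPt_iff_nhds.mp hacc (Metric.ball a δ)
    (Metric.ball_mem_nhds a hδ0)
  obtain ⟨hbball, hbC⟩ := hbU
  have hbδ : |b - a| < δ := by simpa [Real.dist_eq] using hbball
  rcases lt_or_gt_of_ne hbne with hba | hba
  · -- b < a : gap to the left of a
    obtain ⟨α, β, hbα, hαβ, hβa, hgap, hlen⟩ := hsp b hbC a ha hba
    have hS1cpt : IsCompact (C ∩ Icc b α) := hcpt.inter_right isClosed_Icc
    have hS2cpt : IsCompact (C ∩ Icc β a) := hcpt.inter_right isClosed_Icc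
    have hS1ne : (C ∩ Icc b α).Nonempty := ⟨b, hbC, le_refl b, hbα⟩
    have hS2ne : (C ∩ Icc β a).Nonempty := ⟨a, ha, hβa, le_refl a⟩
    obtain ⟨c, hcC, hbc, hcα, hcub⟩ :
        ∃ c, c ∈ C ∧ b ≤ c ∧ c ≤ α ∧ ∀ x ∈ C ∩ Icc b α, x ≤ c := by
      refine ⟨sSup (C ∩ Icc b α), ?_, ?_, ?_, fun x hx => le_csSup hS1cpt.bddAbove hx⟩
      · exact (hS1cpt.sSup_mem hS1ne).1
      · exact (hS1cpt.sSup_mem hS1ne).2.1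
      · exact (hS1cpt.sSup_mem hS1ne).2.2
    obtain ⟨d, hdC, hβd, hda, hdlb⟩ :
        ∃ d, d ∈ C ∧ β ≤ d ∧ d ≤ a ∧ ∀ x ∈ C ∩ Icc β a, d ≤ x := by
      refine ⟨sInf (C ∩ Icc β a), ?_, ?_, ?_, fun x hx => csInf_le hS2cpt.bddBelow hx⟩
      · exact (hS2cpt.sInf_mem hS2ne).1
      · exact (hS2cpt.sInf_mem hS2ne).2.1
      · exact (hS2cpt.sInf_mem hS2ne).2.2
    have hgap' : ∀ x ∈ C, x ≤ c ∨ d ≤ x := by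
      intro x hxC
      rcases le_or_gt x α with hxα | hxα
      · rcases le_or_gt x b with hxb | hxb
        · exact Or.inl (le_trans hxb hbc)
        · exact Or.inl (hcub x ⟨hxC, le_of_lt hxb, hxα⟩)
      rcases le_or_gt β x with hβx | hβx
      · rcases le_or_gt x a with hxa | hxa
        · exact Or.inr (hdlb x ⟨hxC, hβx, hxa⟩)
        · exact Or.inr (le_trans hda (le_of_lt hxa))
      · exfalso
        have hx : x ∈ Ioo α β ∩ C := ⟨⟨hxα, hβx⟩, hxC⟩
        simp [hgap] at hx
    have hca : c < a := lt_of_le_of_lt hcα (lt_of_lt_of_le hαβ hβa)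
    have hac0 : (0:ℝ) < a - c := by linarith
    have hdc : σ * (a - c) ≤ d - c := by
      nlinarith [mul_nonneg hσ.le (show (0:ℝ) ≤ c - b by linarith)]
    have had : a - d ≤ (1 - σ) * (a - c) := by nlinarith
    have hcδ : |c - a| < δ := by
      rw [abs_sub_comm, abs_of_pos hac0]
      calc a - c ≤ a - b := by linarith
      _ = |b - a| := by rw [abs_sub_comm, abs_of_pos (by linarith)]
      _ < δ := hbδ
    have h1 := hest c hcδ
    rw [abs_le] at h1
    have hcabs : |c - a| = a - c := by rw [abs_sub_comm, abs_of_pos hac0]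
    rw [hcabs] at h1
    obtain ⟨h1l, h1r⟩ := h1
    have key1 : ε * (a - c) ≤ (1 - μ) / 2 * (a - c) := mul_le_mul_of_nonneg_right hε2 hac0.le
    have key2 : μ * (a - c) < 1 * (a - c) := mul_lt_mul_of_pos_right hμ1 hac0
    have key3 : ε * (a - c) ≤ (μ - (1 - σ)) / 2 * (a - c) := mul_le_mul_of_nonneg_right hε1 hac0.le
    have key4 : 0 < (μ - (1 - σ)) * (a - c) :=
      mul_pos (show (0:ℝ) < μ - (1 - σ) by linarith) hac0
    have hfc : c < f c := by nlinarith [key1, key2]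
    have hfcd : d ≤ f c := by
      rcases hgap' (f c) (hf c hcC) with h | h
      · exact absurd h (not_le.mpr hfc)
      · exact h
    nlinarith [key3, key4]
  · -- a < b : gap to the right of a
    obtain ⟨α, β, haα, hαβ, hβb, hgap, hlen⟩ := hsp a ha b hbC hba
    have hS1cpt : IsCompact (C ∩ Icc a α) := hcpt.inter_right isClosed_Icc
    have hS2cpt : IsCompact (C ∩ Icc β b) := hcpt.inter_right isClosed_Icc
    have hS1ne : (C ∩ Icc a α).Nonempty := ⟨a, ha, le_refl a, haα⟩
    have hS2ne : (C ∩ Icc β b).Nonempty := ⟨b, hbC, hβb, le_refl b⟩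
    obtain ⟨c, hcC, hac, hcα, hcub⟩ :
        ∃ c, c ∈ C ∧ a ≤ c ∧ c ≤ α ∧ ∀ x ∈ C ∩ Icc a α, x ≤ c := by
      refine ⟨sSup (C ∩ Icc a α), ?_, ?_, ?_, fun x hx => le_csSup hS1cpt.bddAbove hx⟩
      · exact (hS1cpt.sSup_mem hS1ne).1
      · exact (hS1cpt.sSup_mem hS1ne).2.1
      · exact (hS1cpt.sSup_mem hS1ne).2.2
    obtain ⟨d, hdC, hβd, hdb, hdlb⟩ :
        ∃ d, d ∈ C ∧ β ≤ d ∧ d ≤ b ∧ ∀ x ∈ C ∩ Icc β b, d ≤ x := by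
      refine ⟨sInf (C ∩ Icc β b), ?_, ?_, ?_, fun x hx => csInf_le hS2cpt.bddBelow hx⟩
      · exact (hS2cpt.sInf_mem hS2ne).1
      · exact (hS2cpt.sInf_mem hS2ne).2.1
      · exact (hS2cpt.sInf_mem hS2ne).2.2
    have hgap' : ∀ x ∈ C, x ≤ c ∨ d ≤ x := by
      intro x hxC
      rcases le_or_gt x α with hxα | hxα
      · rcases le_or_gt x a with hxa | hxa
        · exact Or.inl (le_trans hxa hac)
        · exact Or.inl (hcub x ⟨hxC, le_of_lt hxa, hxα⟩)
      rcases le_or_gt β x with hβx | hβx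
      · rcases le_or_gt x b with hxb | hxb
        · exact Or.inr (hdlb x ⟨hxC, hβx, hxb⟩)
        · exact Or.inr (le_trans hdb (le_of_lt hxb))
      · exfalso
        have hx : x ∈ Ioo α β ∩ C := ⟨⟨hxα, hβx⟩, hxC⟩
        simp [hgap] at hx
    have hda : a < d := lt_of_le_of_lt haα (lt_of_lt_of_le hαβ hβd)
    have hda0 : (0:ℝ) < d - a := by linarith
    have hdc : σ * (d - a) ≤ d - c := by
      nlinarith [mul_nonneg hσ.le (show (0:ℝ) ≤ b - d by linarith)]
    have hca2 : c - a ≤ (1 - σ) * (d - a) := by nlinarith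
    have hdδ : |d - a| < δ := by
      rw [abs_of_pos hda0]
      calc d - a ≤ b - a := by linarith
      _ = |b - a| := (abs_of_pos (by linarith)).symm
      _ < δ := hbδ
    have h1 := hest d hdδ
    rw [abs_le] at h1
    have hdabs : |d - a| = d - a := abs_of_pos hda0
    rw [hdabs] at h1
    obtain ⟨h1l, h1r⟩ := h1
    have key1 : ε * (d - a) ≤ (1 - μ) / 2 * (d - a) := mul_le_mul_of_nonneg_right hε2 hda0.le
    have key2 : μ * (d - a) < 1 * (d - a) := mul_lt_mul_of_pos_right hμ1 hda0
    have key3 : ε * (d - a) ≤ (μ - (1 - σ)) / 2 * (d - a) := mul_le_mul_of_nonneg_right hε1 hda0.le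
    have key4 : 0 < (μ - (1 - σ)) * (d - a) :=
      mul_pos (show (0:ℝ) < μ - (1 - σ) by linarith) hda0
    have hfd : f d < d := by nlinarith [key1, key2]
    have hfdc : f d ≤ c := by
      rcases hgap' (f d) (hf d hdC) with h | h
      · exact h
      · exact absurd h (not_le.mpr hfd)
    nlinarith [key3, key4]

/-- If `φ` is a `C¹` diffeomorphism of ℝ preserving a σ-sparse Cantor set `C`,
fixing `a ∈ C`, and not 1-flat at `a`, then `|φ'(a) - 1| ≥ σ`. -/
theorem nonflat_deriv_far_from_one (σ : ℝ) (hσ : 0 < σ) (C : Set ℝ)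
    (hC : IsCantorSet C) (hsp : SparseSet σ C)
    (φ ψ : ℝ → ℝ) (hφ : IsC1DiffeoPair φ ψ) (hpres : φ '' C = C)
    (a : ℝ) (ha : a ∈ C) (hfix : φ a = a)
    (hnonflat : ¬ ((fun x => φ x - x) =o[𝓝 a] fun x => x - a)) :
    σ ≤ |deriv φ a - 1| := by
  obtain ⟨hne, hcpt, hperf, -⟩ := hC
  obtain ⟨hφc, hψc, hlinv, hrinv⟩ := hφ
  have hacc : AccPt a (𝓟 C) := hperf.acc a ha
  have hφd : HasDerivAt φ (deriv φ a) a := ((hφc.differentiable one_ne_zero) a).hasDerivAt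
  set lam := deriv φ a with hlam
  -- σ ≤ 1
  have hσ1 : σ ≤ 1 := by
    obtain ⟨b, hbU, hbne⟩ := accPt_iff_nhds.mp hacc univ univ_mem
    have hbC : b ∈ C := hbU.2
    rcases lt_or_gt_of_ne hbne with hba | hba
    · obtain ⟨α, β, h1, h2, h3, -, h5⟩ := hsp b hbC a ha hba
      nlinarith
    · obtain ⟨α, β, h1, h2, h3, -, h5⟩ := hsp a ha b hbC hba
      nlinarith
  have hφpres : ∀ x ∈ C, φ x ∈ C := fun x hx => hpres ▸ mem_image_of_mem φ hx
  rcases lt_trichotomy lam 1 with hl | hl | hl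
  · rcases le_or_gt lam 0 with h0 | h0
    · rw [abs_of_neg (by linarith : lam - 1 < 0)]; linarith
    · have := sparse_core σ hσ C hcpt hsp φ hφpres a ha hacc hfix lam hφd h0 hl
      rw [abs_of_neg (by linarith : lam - 1 < 0)]; linarith
  · exfalso
    apply hnonflat
    have h0 : HasDerivAt (fun x => φ x - x) (lam - 1) a := hφd.sub (hasDerivAt_id a)
    have h0' : HasDerivAt (fun x => φ x - x) 0 a := by simpa [hl] using h0
    have := hasDerivAt_iff_isLittleO.mp h0'
    simpa [hfix] using this
  · -- lam > 1: use ψ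
    have hlam0 : (0:ℝ) < lam := by linarith
    have hψd : HasDerivAt ψ (deriv ψ a) a := ((hψc.differentiable one_ne_zero) a).hasDerivAt
    set ν := deriv ψ a with hνdef
    have hψda : HasDerivAt ψ ν (φ a) := by rw [hfix]; exact hψd
    have hcomp : HasDerivAt (ψ ∘ φ) (ν * lam) a := HasDerivAt.comp a hψda hφd
    have hid : (ψ ∘ φ) = id := funext hlinv
    have hνlam : ν * lam = 1 := by
      have hone : HasDerivAt (ψ ∘ φ) 1 a := by rw [hid]; exact hasDerivAt_id a
      exact hcomp.unique hone
    have hν : ν = 1 / lam := by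
      rw [eq_div_iff (ne_of_gt hlam0)]; exact hνlam
    have hν0 : 0 < ν := by rw [hν]; positivity
    have hν1 : ν < 1 := by rw [hν, div_lt_one hlam0]; exact hl
    have hψfix : ψ a = a := by
      have h := hlinv a
      rw [hfix] at h
      exact h
    have hψpres : ∀ x ∈ C, ψ x ∈ C := by
      intro x hx
      rw [← hpres] at hx
      obtain ⟨y, hy, rfl⟩ := hx
      rw [hlinv y]; exact hy
    have hcore := sparse_core σ hσ C hcpt hsp ψ hψpres a ha hacc hψfix ν hψd hν0 hν1
    rw [abs_of_pos (by linarith : (0:ℝ) < lam - 1)]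
    nlinarith [mul_le_mul_of_nonneg_right hcore hlam0.le]
end

section
/- Let C be a σ-sparse Cantor subset of ℝ and a ∈ C. The map χ sending a C¹ diffeomorphism φ of ℝ that preserves C and fixes a to its derivative φ'(a) is a group homomorphism into ℝ*, and its image restricted to orientation-preserving such diffeomorphisms is a discrete subgroup of the multiplicative group of positive reals (hence trivial or infinite cyclic). -/
open Set Filter Topology Asymptotics

/-- The set of derivatives at `a ∈ C` of orientation-preserving `C¹` diffeomorphisms
preserving `C` and fixing `a`. -/
def derivStab (C : Set ℝ) (a : ℝ) : Set ℝ :=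
  {d : ℝ | ∃ φ ψ : ℝ → ℝ, IsC1DiffeoPair φ ψ ∧ StrictMono φ ∧
    φ '' C = C ∧ φ a = a ∧ deriv φ a = d}

/- ### Auxiliary lemmas -/

lemma realExpIntMul (x : ℝ) (n : ℤ) : Real.exp (n * x) = Real.exp x ^ n := by
  induction n using Int.induction_on with
  | zero => simp
  | succ k ih =>
      have h : (((k : ℤ) + 1 : ℤ) : ℝ) * x = ((k : ℤ) : ℝ) * x + x := by push_cast; ring
      rw [h, Real.exp_add, ih, zpow_add_one₀ (Real.exp_ne_zero x)]
  | pred k ih =>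
      have h : ((-(k : ℤ) - 1 : ℤ) : ℝ) * x = ((-(k : ℤ) : ℤ) : ℝ) * x - x := by
        push_cast; ring
      rw [h, Real.exp_sub, ih, zpow_sub_one₀ (Real.exp_ne_zero x), div_eq_mul_inv]

lemma chainRuleFix {φ φ' : ℝ → ℝ} (hφ : Differentiable ℝ φ) (hφ' : Differentiable ℝ φ')
    (a : ℝ) (h : φ' a = a) : deriv (φ ∘ φ') a = deriv φ a * deriv φ' a := by
  rw [deriv_comp a (hφ _) (hφ' _), h]

lemma invDerivMul {φ ψ : ℝ → ℝ} (hp : IsC1DiffeoPair φ ψ) (a : ℝ) :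
    deriv ψ (φ a) * deriv φ a = 1 := by
  have hφ := hp.1.differentiable one_ne_zero
  have hψ := hp.2.1.differentiable one_ne_zero
  have hid : (ψ ∘ φ) = id := funext hp.2.2.1
  have h1 : deriv (ψ ∘ φ) a = deriv ψ (φ a) * deriv φ a := deriv_comp a (hψ _) (hφ _)
  rw [hid, deriv_id] at h1
  exact h1.symm

lemma derivNeZero {φ ψ : ℝ → ℝ} (hp : IsC1DiffeoPair φ ψ) (a : ℝ) : deriv φ a ≠ 0 :=
  right_ne_zero_of_mul_eq_one (invDerivMul hp a)

lemma strictMonoDerivNonneg {φ : ℝ → ℝ} (hm : StrictMono φ) {a : ℝ}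
    (hd : DifferentiableAt ℝ φ a) : 0 ≤ deriv φ a := by
  have h := hd.hasDerivAt
  rw [hasDerivAt_iff_tendsto_slope] at h
  refine ge_of_tendsto h ?_
  filter_upwards [self_mem_nhdsWithin] with y hy
  have hy' : y ≠ a := hy
  rw [slope_def_field]
  rcases lt_or_gt_of_ne hy' with h' | h'
  · refine div_nonneg_iff.mpr (Or.inr ⟨?_, ?_⟩)
    · linarith [hm h']
    · linarith
  · apply div_nonneg
    · linarith [hm h']
    · linarith

/- ### Membership lemmas for `derivStab` -/

lemma derivStab_one (C : Set ℝ) (a : ℝ) : (1 : ℝ) ∈ derivStab C a :=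
  ⟨id, id, ⟨contDiff_id, contDiff_id, fun _ => rfl, fun _ => rfl⟩, strictMono_id,
    Set.image_id C, rfl, deriv_id a⟩

lemma derivStab_mul (C : Set ℝ) (a : ℝ) :
    ∀ d ∈ derivStab C a, ∀ e ∈ derivStab C a, d * e ∈ derivStab C a := by
  rintro d ⟨φ, ψ, ⟨hφ, hψ, hl, hr⟩, hm, hi, hfa, rfl⟩
    e ⟨φ', ψ', ⟨hφ', hψ', hl', hr'⟩, hm', hi', hfa', rfl⟩
  refine ⟨φ ∘ φ', ψ' ∘ ψ, ⟨hφ.comp hφ', hψ'.comp hψ, ?_, ?_⟩, hm.comp hm', ?_, ?_, ?_⟩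
  · intro x
    show ψ' (ψ (φ (φ' x))) = x
    rw [hl (φ' x), hl' x]
  · intro x
    show φ (φ' (ψ' (ψ x))) = x
    rw [hr' (ψ x), hr x]
  · rw [Set.image_comp, hi', hi]
  · show φ (φ' a) = a
    rw [hfa', hfa]
  · exact chainRuleFix (hφ.differentiable one_ne_zero) (hφ'.differentiable one_ne_zero) a hfa'

lemma derivStab_inv (C : Set ℝ) (a : ℝ) :
    ∀ d ∈ derivStab C a, d⁻¹ ∈ derivStab C a := by
  rintro d ⟨φ, ψ, hp, hm, hi, hfa, rfl⟩
  obtain ⟨hφ, hψ, hl, hr⟩ := hp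
  refine ⟨ψ, φ, ⟨hψ, hφ, hr, hl⟩, ?_, ?_, ?_, ?_⟩
  · intro x y hxy
    rw [← hm.lt_iff_lt, hr x, hr y]
    exact hxy
  · have hco : ψ ∘ φ = id := funext hl
    have h2 : ψ '' C = ψ '' (φ '' C) := by rw [hi]
    rw [h2, ← Set.image_comp, hco, Set.image_id]
  · nth_rewrite 1 [← hfa]
    exact hl a
  · have h := invDerivMul ⟨hφ, hψ, hl, hr⟩ a
    rw [hfa] at h
    exact eq_inv_of_mul_eq_one_left h

lemma derivStab_pos (C : Set ℝ) (a : ℝ) : derivStab C a ⊆ Set.Ioi 0 := by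
  rintro d ⟨φ, ψ, hp, hm, _, _, rfl⟩
  have hne := derivNeZero hp a
  have hnn := strictMonoDerivNonneg hm ((hp.1.differentiable one_ne_zero) a)
  exact lt_of_le_of_ne hnn (Ne.symm hne)

/- ### The key gap lemma -/

lemma keyLemma (σ : ℝ) (hσ : 0 < σ) (C : Set ℝ) (hcl : IsClosed C)
    (hsp : SparseSet σ C) (a : ℝ) (ha : a ∈ C)
    (hacc : ∀ ε > 0, ∃ x ∈ C, a < x ∧ x < a + ε)
    (φ : ℝ → ℝ) (hmap : ∀ x ∈ C, φ x ∈ C) (hfa : φ a = a)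
    (d : ℝ) (hder : HasDerivAt φ d a) (h1 : 1 < d) (h2 : d < 1 + σ) : False := by
  set ε' := min (d - 1) (1 + σ - d) / 2 with hε'def
  have hminpos : 0 < min (d - 1) (1 + σ - d) := lt_min (by linarith) (by linarith)
  have hε'pos : 0 < ε' := by rw [hε'def]; linarith
  have hε'1 : ε' < d - 1 := by
    have := min_le_left (d - 1) (1 + σ - d); rw [hε'def]; linarith
  have hε'2 : d + ε' < 1 + σ := by
    have := min_le_right (d - 1) (1 + σ - d); rw [hε'def]; linarith
  have hlo := hasDerivAt_iff_isLittleO.mp hder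
  have hev := hlo.def hε'pos
  rw [Metric.eventually_nhds_iff] at hev
  obtain ⟨δ, hδpos, hδ⟩ := hev
  obtain ⟨c, hcC, hac, hcδ⟩ := hacc δ hδpos
  obtain ⟨α, β, hαa, hαβ, hβc, hgap, hlen⟩ := hsp a ha c hcC hac
  set K₁ := C ∩ Icc a α with hK₁def
  set K₂ := C ∩ Icc β c with hK₂def
  have hK₁c : IsCompact K₁ :=
    isCompact_Icc.of_isClosed_subset (hcl.inter isClosed_Icc) inter_subset_right
  have hK₂c : IsCompact K₂ :=
    isCompact_Icc.of_isClosed_subset (hcl.inter isClosed_Icc) inter_subset_right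
  have hK₁ne : K₁.Nonempty := ⟨a, ha, le_refl a, hαa⟩
  have hK₂ne : K₂.Nonempty := ⟨c, hcC, hβc, le_refl c⟩
  set α' := sSup K₁ with hα'def
  set β' := sInf K₂ with hβ'def
  have hα'mem : α' ∈ K₁ := hK₁c.sSup_mem hK₁ne
  have hβ'mem : β' ∈ K₂ := hK₂c.sInf_mem hK₂ne
  have hα'C : α' ∈ C := hα'mem.1
  have haα' : a ≤ α' := hα'mem.2.1
  have hα'le : α' ≤ α := hα'mem.2.2
  have hββ' : β ≤ β' := hβ'mem.2.1
  have hβ'c : β' ≤ c := hβ'mem.2.2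
  have hα'β' : α' < β' := lt_of_le_of_lt hα'le (lt_of_lt_of_le hαβ hββ')
  have hgap' : ∀ x ∈ C, ¬(α' < x ∧ x < β') := by
    rintro x hxC ⟨hx1, hx2⟩
    rcases le_or_gt x α with h | h
    · have hxm : x ∈ K₁ := ⟨hxC, (haα'.trans hx1.le), h⟩
      exact absurd (le_csSup hK₁c.bddAbove hxm) (not_le.2 hx1)
    rcases le_or_gt β x with h' | h'
    · have hxm : x ∈ K₂ := ⟨hxC, h', hx2.le.trans hβ'c⟩
      exact absurd (csInf_le hK₂c.bddBelow hxm) (not_le.2 hx2)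
    · have hxm : x ∈ Set.Ioo α β ∩ C := ⟨⟨h, h'⟩, hxC⟩
      rw [hgap] at hxm
      exact hxm
  have hα'a : a < α' := by
    rcases eq_or_lt_of_le haα' with h | h
    · obtain ⟨x, hxC, hax, hxlt⟩ := hacc (β' - a) (by linarith)
      exact absurd ⟨h ▸ hax, by linarith⟩ (hgap' x hxC)
    · exact h
  have hdist : dist α' a < δ := by
    rw [Real.dist_eq, abs_of_pos (by linarith)]
    linarith
  have hest := hδ hdist
  rw [hfa, smul_eq_mul, Real.norm_eq_abs, Real.norm_eq_abs,
    abs_of_pos (show (0:ℝ) < α' - a by linarith)] at hest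
  have habs := abs_le.mp hest
  have ht : 0 < α' - a := by linarith
  have hx1 : α' < φ α' := by
    nlinarith [habs.1, mul_pos ht (show 0 < d - 1 - ε' by linarith)]
  have hx2 : φ α' < β' := by
    nlinarith [habs.2, hlen, mul_pos ht (show 0 < 1 + σ - d - ε' by linarith),
      mul_le_mul_of_nonneg_left (show α' - a ≤ c - a by linarith) hσ.le]
  exact hgap' (φ α') (hmap α' hα'C) ⟨hx1, hx2⟩

/-- Two-sided version: any derivative `> 1` is at least `1 + σ`. -/
lemma gapBound (σ : ℝ) (hσ : 0 < σ) (C : Set ℝ) (hC : IsCantorSet C)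
    (hsp : SparseSet σ C) (a : ℝ) (ha : a ∈ C)
    (φ : ℝ → ℝ) (hmap : ∀ x ∈ C, φ x ∈ C) (hfa : φ a = a)
    (d : ℝ) (hder : HasDerivAt φ d a) (h1 : 1 < d) : 1 + σ ≤ d := by
  by_contra h2
  push_neg at h2
  obtain ⟨hne, hcomp, hperf, _⟩ := hC
  have hcl : IsClosed C := hcomp.isClosed
  have hAcc : ∀ ε > 0, ∃ y ∈ C, y ≠ a ∧ |y - a| < ε := by
    intro ε hε
    have hacc := hperf.acc a ha
    rw [accPt_iff_nhds] at hacc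
    obtain ⟨y, ⟨hyU, hyC⟩, hyne⟩ := hacc (Metric.ball a ε) (Metric.ball_mem_nhds a hε)
    exact ⟨y, hyC, hyne, by rwa [Metric.mem_ball, Real.dist_eq] at hyU⟩
  by_cases hR : ∀ ε > 0, ∃ x ∈ C, a < x ∧ x < a + ε
  · exact keyLemma σ hσ C hcl hsp a ha hR φ hmap hfa d hder h1 h2
  · push_neg at hR
    obtain ⟨ε₀, hε₀, hno⟩ := hR
    have hL : ∀ ε > 0, ∃ x ∈ C, a - ε < x ∧ x < a := by
      intro ε hε
      obtain ⟨y, hyC, hyne, hyd⟩ := hAcc (min ε ε₀) (lt_min hε hε₀)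
      have habs := abs_lt.mp hyd
      have h₁ := min_le_left ε ε₀
      have h₂ := min_le_right ε ε₀
      rcases lt_or_gt_of_ne hyne with h | h
      · exact ⟨y, hyC, by linarith, h⟩
      · exfalso
        have := hno y hyC h
        linarith
    -- Reflect everything through `a`
    set C' := (fun x : ℝ => 2 * a - x) '' C with hC'def
    have hcl' : IsClosed C' :=
      (hcomp.image (continuous_const.sub continuous_id)).isClosed
    have ha' : a ∈ C' := ⟨a, ha, by ring⟩
    have hsp' : SparseSet σ C' := by
      rintro u ⟨p, hpC, rfl⟩ v ⟨q, hqC, rfl⟩ huv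
      have hqp : q < p := by dsimp at huv ⊢; linarith
      obtain ⟨α, β, hα, hαβ, hβ, hgap, hlen⟩ := hsp q hqC p hpC hqp
      refine ⟨2 * a - β, 2 * a - α, by dsimp; linarith, by linarith, by dsimp; linarith, ?_, ?_⟩
      · ext z
        simp only [Set.mem_inter_iff, Set.mem_Ioo, Set.mem_empty_iff_false, iff_false, not_and]
        rintro ⟨hz1, hz2⟩ ⟨w, hwC, rfl⟩
        dsimp only at hz1 hz2
        have hw : w ∈ Set.Ioo α β ∩ C := ⟨⟨by linarith, by linarith⟩, hwC⟩
        rw [hgap] at hw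
        exact hw
      · dsimp; linarith
    have hacc' : ∀ ε > 0, ∃ x ∈ C', a < x ∧ x < a + ε := by
      intro ε hε
      obtain ⟨x, hxC, hx1, hx2⟩ := hL ε hε
      exact ⟨2 * a - x, ⟨x, hxC, rfl⟩, by linarith, by linarith⟩
    set φ' := fun x : ℝ => 2 * a - φ (2 * a - x) with hφ'def
    have hmap' : ∀ y ∈ C', φ' y ∈ C' := by
      rintro y ⟨w, hwC, rfl⟩
      refine ⟨φ w, hmap w hwC, ?_⟩
      show 2 * a - φ w = 2 * a - φ (2 * a - (2 * a - w))
      rw [show 2 * a - (2 * a - w) = w by ring]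
    have hfa' : φ' a = a := by
      show 2 * a - φ (2 * a - a) = a
      rw [show 2 * a - a = a by ring, hfa]
      ring
    have hder' : HasDerivAt φ' d a := by
      have hg : HasDerivAt (fun x : ℝ => 2 * a - x) (-1) a := by
        simpa using (hasDerivAt_id a).const_sub (2 * a)
      have hder2 : HasDerivAt φ d (2 * a - a) := by
        rw [show 2 * a - a = a by ring]; exact hder
      have hcmp : HasDerivAt (fun x : ℝ => φ (2 * a - x)) (d * (-1)) a :=
        hder2.comp a hg
      have := hcmp.const_sub (2 * a)
      simpa using this
    exact keyLemma σ hσ C' hcl' hsp' a ha' hacc' φ' hmap' hfa' d hder' h1 h2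

lemma gapBound' (σ : ℝ) (hσ : 0 < σ) (C : Set ℝ) (hC : IsCantorSet C)
    (hsp : SparseSet σ C) (a : ℝ) (ha : a ∈ C) :
    ∀ d ∈ derivStab C a, 1 < d → 1 + σ ≤ d := by
  rintro d ⟨φ, ψ, hp, hm, hi, hfa, rfl⟩ h1
  have hmap : ∀ x ∈ C, φ x ∈ C := fun x hx => hi ▸ Set.mem_image_of_mem φ hx
  have hder : HasDerivAt φ (deriv φ a) a :=
    ((hp.1.differentiable one_ne_zero) a).hasDerivAt
  exact gapBound σ hσ C hC hsp a ha φ hmap hfa _ hder h1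

/- ### Main theorem -/

/-- The derivative-at-`a` map on the stabilizer of `a ∈ C` is multiplicative with
nonzero values, and its image on orientation-preserving diffeomorphisms is a discrete
subgroup of the positive reals, hence trivial or infinite cyclic. -/
theorem deriv_at_point_hom_discrete (σ : ℝ) (hσ : 0 < σ) (C : Set ℝ)
    (hC : IsCantorSet C) (hsp : SparseSet σ C) (a : ℝ) (ha : a ∈ C) :
    (∀ φ ψ φ' ψ' : ℝ → ℝ, IsC1DiffeoPair φ ψ → φ '' C = C → φ a = a →
      IsC1DiffeoPair φ' ψ' → φ' '' C = C → φ' a = a →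
      deriv (φ ∘ φ') a = deriv φ a * deriv φ' a ∧ deriv φ a ≠ 0) ∧
    (derivStab C a ⊆ Set.Ioi 0 ∧ (1 : ℝ) ∈ derivStab C a ∧
      (∀ d ∈ derivStab C a, ∀ e ∈ derivStab C a, d * e ∈ derivStab C a) ∧
      (∀ d ∈ derivStab C a, d⁻¹ ∈ derivStab C a) ∧
      (∃ ε > 0, ∀ d ∈ derivStab C a, |d - 1| < ε → d = 1) ∧
      (∃ p : ℝ, 1 ≤ p ∧ derivStab C a = {x : ℝ | ∃ k : ℤ, x = p ^ k})) := by
  have hpos := derivStab_pos C a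
  have hone := derivStab_one C a
  have hmul := derivStab_mul C a
  have hinv := derivStab_inv C a
  have hgb := gapBound' σ hσ C hC hsp a ha
  refine ⟨?_, hpos, hone, hmul, hinv, ?_, ?_⟩
  · intro φ ψ φ' ψ' hp _ _ hp' _ hfa'
    exact ⟨chainRuleFix (hp.1.differentiable one_ne_zero) (hp'.1.differentiable one_ne_zero) a hfa',
      derivNeZero hp a⟩
  · -- discreteness
    refine ⟨σ / (1 + σ), by positivity, ?_⟩
    intro d hd hlt
    have hd0 : 0 < d := hpos hd
    rcases lt_trichotomy d 1 with h | h | h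
    · exfalso
      have hdinv : d⁻¹ ∈ derivStab C a := hinv d hd
      have h1 : 1 < d⁻¹ := (one_lt_inv_iff₀).mpr ⟨hd0, h⟩
      have := hgb d⁻¹ hdinv h1
      have habs : 1 - d < σ / (1 + σ) := by
        rw [abs_lt] at hlt; linarith [hlt.1]
      have hmul1 : (1 + σ) * d ≤ 1 := by
        have h2 := mul_le_mul_of_nonneg_right this hd0.le
        rwa [inv_mul_cancel₀ hd0.ne'] at h2
      have : σ / (1 + σ) ≤ 1 - d := by
        rw [div_le_iff₀ (by linarith)]
        nlinarith
      linarith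
    · exact h
    · exfalso
      have := hgb d hd h
      rw [abs_lt] at hlt
      have : σ / (1 + σ) < σ := by
        rw [div_lt_iff₀ (by linarith)]; nlinarith
      linarith [hlt.2]
  · -- cyclic structure
    classical
    let S : AddSubgroup ℝ :=
      { carrier := Real.log '' derivStab C a
        zero_mem' := ⟨1, hone, Real.log_one⟩
        add_mem' := by
          rintro x y ⟨d, hd, rfl⟩ ⟨e, he, rfl⟩
          exact ⟨d * e, hmul d hd e he,
            Real.log_mul (ne_of_gt (hpos hd)) (ne_of_gt (hpos he))⟩
        neg_mem' := by
          rintro x ⟨d, hd, rfl⟩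
          exact ⟨d⁻¹, hinv d hd, Real.log_inv d⟩ }
    have hcar : ∀ x : ℝ, x ∈ S ↔ x ∈ Real.log '' derivStab C a := fun x => Iff.rfl
    rcases S.dense_or_cyclic with hdense | ⟨g, hg⟩
    · exfalso
      have hlogpos : 0 < Real.log (1 + σ) := Real.log_pos (by linarith)
      obtain ⟨l, hlS, hl⟩ := hdense.exists_mem_open isOpen_Ioo
        (nonempty_Ioo.2 hlogpos)
      obtain ⟨d, hd, rfl⟩ := (hcar l).mp hlS
      have hd0 : 0 < d := hpos hd
      have h1 : 1 < d := (Real.log_pos_iff hd0.le).mp hl.1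
      have h2 : d < 1 + σ := (Real.log_lt_log_iff hd0 (by linarith)).mp hl.2
      have := hgb d hd h1
      linarith
    · -- S = closure {g}
      have hmem : ∀ x : ℝ, x ∈ Real.log '' derivStab C a ↔ ∃ n : ℤ, (n : ℝ) * g = x := by
        intro x
        rw [← hcar, hg, AddSubgroup.mem_closure_singleton]
        constructor
        · rintro ⟨n, hn⟩; exact ⟨n, by rw [← hn]; simp [zsmul_eq_mul]⟩
        · rintro ⟨n, hn⟩; exact ⟨n, by rw [zsmul_eq_mul]; exact hn⟩
      have hexpg : ∀ n : ℤ, Real.exp g ^ n ∈ derivStab C a := by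
        intro n
        obtain ⟨d, hd, hld⟩ := (hmem ((n : ℝ) * g)).mpr ⟨n, rfl⟩
        have hd0 : 0 < d := hpos hd
        have : d = Real.exp g ^ n := by
          rw [← Real.exp_log hd0, hld, realExpIntMul]
        rwa [← this]
      have hforward : ∀ d ∈ derivStab C a, ∃ n : ℤ, d = Real.exp g ^ n := by
        intro d hd
        obtain ⟨n, hn⟩ := (hmem (Real.log d)).mp ⟨d, hd, rfl⟩
        refine ⟨n, ?_⟩
        rw [← Real.exp_log (hpos hd), ← hn, realExpIntMul]
      refine ⟨Real.exp |g|, Real.one_le_exp (abs_nonneg g), ?_⟩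
      have hkey : ∀ k : ℤ, Real.exp |g| ^ k = Real.exp g ^ (if 0 ≤ g then k else -k) := by
        intro k
        rcases le_or_gt 0 g with hgn | hgn
        · rw [abs_of_nonneg hgn, if_pos hgn]
        · rw [abs_of_neg hgn, if_neg (not_le.2 hgn)]
          rw [← realExpIntMul, ← realExpIntMul]
          congr 1
          push_cast
          ring
      ext x
      simp only [Set.mem_setOf_eq]
      constructor
      · intro hx
        obtain ⟨n, hn⟩ := hforward x hx
        refine ⟨if 0 ≤ g then n else -n, ?_⟩
        rw [hkey]
        rcases le_or_gt 0 g with hgn | hgn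
        · rw [if_pos hgn, if_pos hgn]; exact hn
        · rw [if_neg (not_le.2 hgn), if_neg (not_le.2 hgn), neg_neg]; exact hn
      · rintro ⟨k, rfl⟩
        rw [hkey k]
        exact hexpg _
end

section
/- Let C be a σ-sparse Cantor subset of ℝ and a ∈ C. For any orientation-preserving C¹ diffeomorphism φ of ℝ preserving C with φ(a) = a, either the restriction of φ to C is the identity in a neighborhood of a, or there exists ψ with ψ(a) = a such that in a small neighborhood of a the restriction of φ to C coincides with an iterate ψ^k (k ∈ ℤ \ {0}) of ψ, where ψ(x) = a + p(x − a) + o(x − a) with |p − 1| ≥ σ. Consequently the group of germs at a of orientation-preserving C¹ diffeomorphisms preserving C and fixing a, modulo those that are the identity on C near a, is either trivial or isomorphic to ℤ. -/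
open Set Filter Topology Asymptotics

/-- Between any two points of a closed `σ`-sparse set there is a maximal complementary
gap whose endpoints lie in the set. -/
lemma gap_exists {σ : ℝ} {C : Set ℝ} (hclosed : IsClosed C) (hsp : SparseSet σ C)
    {w x : ℝ} (hw : w ∈ C) (hx : x ∈ C) (hwx : w < x) :
    ∃ u v : ℝ, u ∈ C ∧ v ∈ C ∧ w ≤ u ∧ u < v ∧ v ≤ x ∧ σ * (x - w) ≤ v - u ∧
      Set.Ioo u v ∩ C = ∅ := by
  obtain ⟨α, β, hwα, hαβ, hβx, hgap, hlen⟩ := hsp w hw x hx hwx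
  have hS₁c : IsClosed (C ∩ Set.Icc w α) := hclosed.inter isClosed_Icc
  have hS₂c : IsClosed (C ∩ Set.Icc β x) := hclosed.inter isClosed_Icc
  have hS₁ne : (C ∩ Set.Icc w α).Nonempty := ⟨w, hw, le_rfl, hwα⟩
  have hS₂ne : (C ∩ Set.Icc β x).Nonempty := ⟨x, hx, hβx, le_rfl⟩
  have hS₁bdd : BddAbove (C ∩ Set.Icc w α) := ⟨α, fun y hy => hy.2.2⟩
  have hS₂bdd : BddBelow (C ∩ Set.Icc β x) := ⟨β, fun y hy => hy.2.1⟩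
  set u := sSup (C ∩ Set.Icc w α) with hu
  set v := sInf (C ∩ Set.Icc β x) with hv
  have huS : u ∈ C ∩ Set.Icc w α := hS₁c.csSup_mem hS₁ne hS₁bdd
  have hvS : v ∈ C ∩ Set.Icc β x := hS₂c.csInf_mem hS₂ne hS₂bdd
  refine ⟨u, v, huS.1, hvS.1, huS.2.1, ?_, hvS.2.2, ?_, ?_⟩
  · exact lt_of_le_of_lt huS.2.2 (lt_of_lt_of_le hαβ hvS.2.1)
  · have h1 := huS.2.2
    have h2 := hvS.2.1
    linarith
  · apply Set.eq_empty_iff_forall_notMem.mpr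
    rintro c ⟨⟨hc1, hc2⟩, hcC⟩
    rcases le_or_gt c α with h | h
    · have : c ≤ u := le_csSup hS₁bdd ⟨hcC, le_trans huS.2.1 hc1.le, h⟩
      linarith
    · rcases le_or_gt β c with h' | h'
      · have : v ≤ c := csInf_le hS₂bdd ⟨hcC, h', le_trans hc2.le hvS.2.2⟩
        linarith
      · exact Set.eq_empty_iff_forall_notMem.mp hgap c ⟨⟨h, h'⟩, hcC⟩

/-- Mean value estimate: if the derivative is within `ρ` of `1` on a `δ`-neighbourhood
of `a`, then `φ` distorts differences inside that neighbourhood by at most `ρ`. -/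
lemma mvt_est {φ : ℝ → ℝ} (hdiff : Differentiable ℝ φ) {a δ ρ : ℝ}
    (hd : ∀ t : ℝ, |t - a| ≤ δ → |deriv φ t - 1| ≤ ρ)
    {s t : ℝ} (h1 : a - δ ≤ s) (h2 : s < t) (h3 : t ≤ a + δ) :
    |φ t - φ s - (t - s)| ≤ ρ * (t - s) := by
  obtain ⟨ξ, hξ, hsl⟩ := exists_hasDerivAt_eq_slope φ (deriv φ) h2
    hdiff.continuous.continuousOn (fun y _ => (hdiff y).hasDerivAt)
  have hts : (0:ℝ) < t - s := by linarith
  have hξa : |ξ - a| ≤ δ := abs_le.mpr ⟨by linarith [hξ.1], by linarith [hξ.2]⟩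
  have key : φ t - φ s - (t - s) = (deriv φ ξ - 1) * (t - s) := by
    have : φ t - φ s = deriv φ ξ * (t - s) := by
      rw [hsl]; field_simp
    rw [this]; ring
  rw [key, abs_mul, abs_of_pos hts]
  exact mul_le_mul_of_nonneg_right (hd ξ hξa) hts.le

/-- If the derivative stays `σ/2`-close to `1` near `a`, then between a fixed point of `φ`
in `C` and any other point of `C` (both near `a`) there is a complementary gap of `C`
both of whose endpoints are fixed by `φ`. -/
lemma fixed_between {σ : ℝ} (hσ : 0 < σ) {C : Set ℝ} (hclosed : IsClosed C)
    (hsp : SparseSet σ C) {φ : ℝ → ℝ} (hdiff : Differentiable ℝ φ) (hmono : StrictMono φ)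
    (hmaps : ∀ y ∈ C, φ y ∈ C)
    (himg : ∀ u v : ℝ, Set.Ioo u v ∩ C = ∅ → Set.Ioo (φ u) (φ v) ∩ C = ∅)
    {a δ : ℝ} (hd : ∀ t : ℝ, |t - a| ≤ δ → |deriv φ t - 1| ≤ σ/2)
    {lo hi : ℝ} (hloC : lo ∈ C) (hhiC : hi ∈ C) (hlohi : lo < hi)
    (hlo : a - δ ≤ lo) (hhi : hi ≤ a + δ) (hfb : φ lo = lo ∨ φ hi = hi) :
    ∃ u v : ℝ, u ∈ C ∧ v ∈ C ∧ lo ≤ u ∧ u < v ∧ v ≤ hi ∧ φ u = u ∧ φ v = v := by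
  obtain ⟨u, v, huC, hvC, hlou, huv, hvhi, hlen, hgap⟩ :=
    gap_exists hclosed hsp hloC hhiC hlohi
  have hnotin : ∀ y ∈ C, y ∉ Set.Ioo u v := fun y hy hmem =>
    Set.eq_empty_iff_forall_notMem.mp hgap y ⟨hmem, hy⟩
  have hφuC := hmaps u huC
  have hφvC := hmaps v hvC
  have himg' := himg u v hgap
  have hnotin' : ∀ y ∈ C, y ∉ Set.Ioo (φ u) (φ v) := fun y hy hmem =>
    Set.eq_empty_iff_forall_notMem.mp himg' y ⟨hmem, hy⟩
  rcases lt_trichotomy (φ u) u with hc | hc | hc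
  · -- φ u < u : impossible
    exfalso
    have hφv_le : φ v ≤ u := by
      by_contra h; push_neg at h
      exact hnotin' u huC ⟨hc, h⟩
    rcases hfb with hf | hf
    · have hlov : lo < v := lt_of_le_of_lt hlou huv
      have hm := mvt_est hdiff hd hlo hlov (le_trans hvhi hhi)
      rw [hf] at hm
      have h1 : v - φ v ≤ σ/2 * (v - lo) := by
        have := (abs_le.mp hm).1; linarith
      have e1 : σ * (v - lo) ≤ σ * (hi - lo) := by nlinarith
      nlinarith [mul_pos hσ (sub_pos.mpr hlov)]
    · have hvhi' : v < hi := by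
        rcases eq_or_lt_of_le hvhi with he | h
        · exfalso; rw [he, hf] at hφv_le; linarith [he ▸ huv]
        · exact h
      have hm := mvt_est hdiff hd (by linarith : a - δ ≤ v) hvhi' hhi
      rw [hf] at hm
      have h1 : v - φ v ≤ σ/2 * (hi - v) := by
        have := (abs_le.mp hm).2; linarith
      have e1 : σ * (hi - v) ≤ σ * (hi - lo) := by nlinarith
      nlinarith [mul_pos hσ (sub_pos.mpr hvhi')]
  · -- φ u = u : then φ v = v as well
    rcases lt_trichotomy (φ v) v with hd2 | hd2 | hd2
    · exfalso
      refine hnotin (φ v) hφvC ⟨?_, hd2⟩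
      rw [← hc]; exact hmono huv
    · exact ⟨u, v, huC, hvC, hlou, huv, hvhi, hc, hd2⟩
    · exfalso
      refine hnotin' v hvC ⟨?_, hd2⟩
      rw [hc]; exact huv
  · -- φ u > u : impossible
    exfalso
    have hφu_ge : v ≤ φ u := by
      by_contra h; push_neg at h
      exact hnotin (φ u) hφuC ⟨hc, h⟩
    rcases hfb with hf | hf
    · have hlt : lo < u := by
        rcases eq_or_lt_of_le hlou with he | h
        · exfalso; rw [← he, hf] at hc; exact lt_irrefl _ hc
        · exact h
      have hm := mvt_est hdiff hd hlo hlt (by linarith : u ≤ a + δ)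
      rw [hf] at hm
      have h1 : φ u - u ≤ σ/2 * (u - lo) := by
        have := (abs_le.mp hm).2; linarith
      have e1 : σ * (u - lo) ≤ σ * (hi - lo) := by nlinarith
      nlinarith [mul_pos hσ (sub_pos.mpr hlt)]
    · have huhi : u < hi := lt_of_lt_of_le huv hvhi
      have hm := mvt_est hdiff hd (by linarith : a - δ ≤ u) huhi hhi
      rw [hf] at hm
      have h1 : φ u - u ≤ σ/2 * (hi - u) := by
        have := (abs_le.mp hm).1; linarith
      have e1 : σ * (hi - u) ≤ σ * (hi - lo) := by nlinarith
      nlinarith [mul_pos hσ (sub_pos.mpr huhi)]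

/-- If the derivative stays `σ/2`-close to `1` on a `δ`-neighbourhood of a fixed point
`a ∈ C`, then `φ` fixes every point of `C` in that neighbourhood. -/
lemma fixed_all {σ : ℝ} (hσ : 0 < σ) {C : Set ℝ} (hclosed : IsClosed C)
    (hsp : SparseSet σ C) {φ : ℝ → ℝ} (hdiff : Differentiable ℝ φ) (hmono : StrictMono φ)
    (hmaps : ∀ y ∈ C, φ y ∈ C)
    (himg : ∀ u v : ℝ, Set.Ioo u v ∩ C = ∅ → Set.Ioo (φ u) (φ v) ∩ C = ∅)
    {a δ : ℝ} (hδ : 0 < δ) (haC : a ∈ C) (hfa : φ a = a)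
    (hd : ∀ t : ℝ, |t - a| ≤ δ → |deriv φ t - 1| ≤ σ/2)
    {x : ℝ} (hx : x ∈ C) (hxa : |x - a| ≤ δ) : φ x = x := by
  have hxa' := abs_le.mp hxa
  rcases lt_trichotomy x a with hlt | heq | hlt
  · -- x < a : use the infimum of fixed points above x
    set S := (C ∩ Set.Icc x a) ∩ {w : ℝ | φ w = w} with hS
    have hSc : IsClosed S :=
      (hclosed.inter isClosed_Icc).inter (isClosed_eq hdiff.continuous continuous_id)
    have hSne : S.Nonempty := ⟨a, ⟨haC, hlt.le, le_rfl⟩, hfa⟩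
    have hSbdd : BddBelow S := ⟨x, fun y hy => hy.1.2.1⟩
    have hmS : sInf S ∈ S := hSc.csInf_mem hSne hSbdd
    rcases eq_or_lt_of_le hmS.1.2.1 with he | hlt2
    · rw [← he] at hmS; exact hmS.2
    · exfalso
      obtain ⟨u, v, huC, hvC, hxu, huv, hvm, hφu, hφv⟩ :=
        fixed_between hσ hclosed hsp hdiff hmono hmaps himg hd hx hmS.1.1 hlt2
          (by linarith [hxa'.1]) (by linarith [hmS.1.2.2]) (Or.inr hmS.2)
      have huS : u ∈ S := ⟨⟨huC, hxu, by linarith [hmS.1.2.2]⟩, hφu⟩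
      have := csInf_le hSbdd huS
      linarith
  · rw [heq]; exact hfa
  · -- a < x : use the supremum of fixed points below x
    set S := (C ∩ Set.Icc a x) ∩ {w : ℝ | φ w = w} with hS
    have hSc : IsClosed S :=
      (hclosed.inter isClosed_Icc).inter (isClosed_eq hdiff.continuous continuous_id)
    have hSne : S.Nonempty := ⟨a, ⟨haC, le_rfl, hlt.le⟩, hfa⟩
    have hSbdd : BddAbove S := ⟨x, fun y hy => hy.1.2.2⟩
    have hmS : sSup S ∈ S := hSc.csSup_mem hSne hSbdd
    rcases eq_or_lt_of_le hmS.1.2.2 with he | hlt2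
    · rw [he] at hmS; exact hmS.2
    · exfalso
      obtain ⟨u, v, huC, hvC, hmu, huv, hvx, hφu, hφv⟩ :=
        fixed_between hσ hclosed hsp hdiff hmono hmaps himg hd hmS.1.1 hx hlt2
          (by linarith [hmS.1.2.1]) (by linarith [hxa'.2]) (Or.inl hmS.2)
      have hvS : v ∈ S := ⟨⟨hvC, by linarith [hmS.1.2.1], hvx⟩, hφv⟩
      have := le_csSup hSbdd hvS
      linarith
/-- Dichotomy for point stabilizers: any orientation-preserving `C¹` diffeomorphism
preserving a σ-sparse Cantor set `C` and fixing `a ∈ C` is, on `C` near `a`, either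
the identity or a nonzero power of a fixed generator `ψ` of the form
`ψ(x) = a + p(x-a) + o(x-a)` with `|p-1| ≥ σ`; hence the germ group is trivial or ℤ. -/
theorem stabilizer_germ_dichotomy (σ : ℝ) (hσ : 0 < σ) (C : Set ℝ)
    (hC : IsCantorSet C) (hsp : SparseSet σ C) (a : ℝ) (ha : a ∈ C)
    (φ φinv : ℝ → ℝ) (hφ : IsC1DiffeoPair φ φinv) (hmono : StrictMono φ)
    (hpres : φ '' C = C) (hfix : φ a = a) :
    (∃ ε > 0, ∀ x ∈ C, |x - a| < ε → φ x = x) ∨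
    (∃ ψ : Equiv.Perm ℝ, IsC1DiffeoPair ψ ψ.symm ∧ StrictMono ψ ∧
      (ψ : ℝ → ℝ) '' C = C ∧ ψ a = a ∧
      (∃ p : ℝ, σ ≤ |p - 1| ∧
        ((fun x => ψ x - (a + p * (x - a))) =o[𝓝 a] fun x => x - a)) ∧
      ∃ k : ℤ, k ≠ 0 ∧ ∃ ε > 0, ∀ x ∈ C, |x - a| < ε → φ x = (ψ ^ k) x) := by
  have hclosed : IsClosed C := hC.2.1.isClosed
  have hmaps : ∀ y ∈ C, φ y ∈ C := by
    intro y hy; rw [← hpres]; exact Set.mem_image_of_mem φ hy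
  have hinvC : ∀ y ∈ C, φinv y ∈ C := by
    intro y hy
    rw [← hpres] at hy
    obtain ⟨c, hc, hcy⟩ := hy
    rw [← hcy, hφ.2.2.1 c]
    exact hc
  have hmono_inv : StrictMono φinv := fun s t hst =>
    hmono.lt_iff_lt.mp (by rw [hφ.2.2.2 s, hφ.2.2.2 t]; exact hst)
  have himg : ∀ u v : ℝ, Set.Ioo u v ∩ C = ∅ → Set.Ioo (φ u) (φ v) ∩ C = ∅ := by
    intro u v hguv
    apply Set.eq_empty_iff_forall_notMem.mpr
    rintro y ⟨⟨h1, h2⟩, hyC⟩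
    have hy1 : u < φinv y := by
      have := hmono_inv h1; rwa [hφ.2.2.1 u] at this
    have hy2 : φinv y < v := by
      have := hmono_inv h2; rwa [hφ.2.2.1 v] at this
    exact Set.eq_empty_iff_forall_notMem.mp hguv (φinv y) ⟨⟨hy1, hy2⟩, hinvC y hyC⟩
  have hdiffφ : Differentiable ℝ φ := hφ.1.differentiable one_ne_zero
  set p := deriv φ a with hp
  have hder : HasDerivAt φ p a := (hdiffφ a).hasDerivAt
  by_cases hp1 : p = 1
  · -- derivative 1 : identity on C near a
    left
    have hcd : Continuous (deriv φ) := hφ.1.continuous_deriv le_rfl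
    obtain ⟨δ, hδpos, hδ⟩ := Metric.continuousAt_iff.mp hcd.continuousAt (σ/2) (by positivity)
    have hdb : ∀ t : ℝ, |t - a| ≤ δ/2 → |deriv φ t - 1| ≤ σ/2 := by
      intro t ht
      have h1 : dist t a < δ := by rw [Real.dist_eq]; linarith
      have h2 := hδ h1
      rw [Real.dist_eq, ← hp, hp1] at h2
      linarith
    exact ⟨δ/2, by positivity, fun x hx hxd =>
      fixed_all hσ hclosed hsp hdiffφ hmono hmaps himg (by positivity) ha hfix hdb hx hxd.le⟩
  · -- derivative p ≠ 1 : φ itself generates, with σ ≤ |p - 1|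
    right
    have hslope : Tendsto (slope φ a) (𝓝[≠] a) (𝓝 p) := hasDerivAt_iff_tendsto_slope.mp hder
    -- accumulation of C at a from one side
    have hacc : ∀ ε > 0, ∃ y ∈ C, y ≠ a ∧ |y - a| < ε := by
      intro ε hε
      obtain ⟨y, ⟨hyU, hyC⟩, hne⟩ := (accPt_iff_nhds (x := a) (C := C)).mp (hC.2.2.1.acc a ha)
        (Metric.ball a ε) (Metric.ball_mem_nhds a hε)
      refine ⟨y, hyC, hne, ?_⟩
      have := Metric.mem_ball.mp hyU
      rwa [Real.dist_eq] at this
    have hside : (∀ ε > 0, ∃ y ∈ C, a < y ∧ y < a + ε) ∨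
        (∀ ε > 0, ∃ y ∈ C, a - ε < y ∧ y < a) := by
      by_cases hR : ∀ ε > 0, ∃ y ∈ C, a < y ∧ y < a + ε
      · exact Or.inl hR
      · push_neg at hR
        obtain ⟨ε₀, hε₀, hno⟩ := hR
        right
        intro ε hε
        obtain ⟨y, hyC, hne, hb⟩ := hacc (min ε ε₀) (lt_min hε hε₀)
        have hb' := abs_lt.mp hb
        refine ⟨y, hyC, by linarith [min_le_left ε ε₀], ?_⟩
        rcases lt_or_gt_of_ne hne with h | h
        · exact h
        · exfalso
          have := hno y hyC h
          linarith [min_le_right ε ε₀]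
    have hσp : σ ≤ |p - 1| := by
      rcases lt_or_gt_of_ne hp1 with hplt | hpgt
      · -- p < 1
        have hev : ∀ᶠ u in 𝓝[≠] a, slope φ a u < 1 := hslope.eventually (Iio_mem_nhds hplt)
        obtain ⟨ε₁, hε₁, hball⟩ := Metric.mem_nhdsWithin_iff.mp hev
        have hsl₁ : ∀ u : ℝ, u ≠ a → |u - a| < ε₁ → slope φ a u < 1 := fun u hne hu =>
          hball ⟨Metric.mem_ball.mpr (by rwa [Real.dist_eq]), hne⟩
        have key : ∀ ε > 0, ∃ u : ℝ, u ≠ a ∧ |u - a| < ε ∧ slope φ a u ≤ 1 - σ := by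
          intro ε hε
          have hmin : 0 < min ε ε₁ := lt_min hε hε₁
          rcases hside with hRa | hLa
          · obtain ⟨y, hyC, hay, hyb⟩ := hRa (min ε ε₁) hmin
            obtain ⟨u, v, huC, hvC, hau, huv, hvy, hlen, hgap⟩ :=
              gap_exists hclosed hsp ha hyC hay
            have hva : a < v := lt_of_le_of_lt hau huv
            have hvne : v ≠ a := ne_of_gt hva
            have hvb : |v - a| < min ε ε₁ := by
              rw [abs_of_pos (by linarith)]; linarith
            have hsl := hsl₁ v hvne (lt_of_lt_of_le hvb (min_le_right _ _))
            rw [slope_def_field, hfix] at hsl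
            have hφv_lt : φ v < v := by
              have := (div_lt_one (by linarith : (0:ℝ) < v - a)).mp hsl
              linarith
            have hφvC := hmaps v hvC
            have hle : φ v ≤ u := by
              by_contra hcon; push_neg at hcon
              exact Set.eq_empty_iff_forall_notMem.mp hgap (φ v) ⟨⟨hcon, hφv_lt⟩, hφvC⟩
            refine ⟨v, hvne, lt_of_lt_of_le hvb (min_le_left _ _), ?_⟩
            rw [slope_def_field, hfix, div_le_iff₀ (by linarith : (0:ℝ) < v - a)]
            have e1 : σ * (v - a) ≤ σ * (y - a) := by nlinarith
            nlinarith
          · obtain ⟨y, hyC, hyb, hya⟩ := hLa (min ε ε₁) hmin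
            obtain ⟨u, v, huC, hvC, hyu, huv, hva, hlen, hgap⟩ :=
              gap_exists hclosed hsp hyC ha hya
            have hua : u < a := lt_of_lt_of_le huv hva
            have hune : u ≠ a := ne_of_lt hua
            have hub : |u - a| < min ε ε₁ := by
              rw [abs_of_neg (by linarith)]; linarith
            have hsl := hsl₁ u hune (lt_of_lt_of_le hub (min_le_right _ _))
            rw [slope_def_field, hfix] at hsl
            have hφu_gt : u < φ u := by
              have := (div_lt_iff_of_neg (by linarith : u - a < 0)).mp hsl
              linarith
            have hφuC := hmaps u huC
            have hge : v ≤ φ u := by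
              by_contra hcon; push_neg at hcon
              exact Set.eq_empty_iff_forall_notMem.mp hgap (φ u) ⟨⟨hφu_gt, hcon⟩, hφuC⟩
            refine ⟨u, hune, lt_of_lt_of_le hub (min_le_left _ _), ?_⟩
            rw [slope_def_field, hfix, div_le_iff_of_neg (by linarith : u - a < 0)]
            have e1 : σ * (a - u) ≤ σ * (a - y) := by nlinarith
            nlinarith
        have hfreq : ∃ᶠ u in 𝓝[≠] a, slope φ a u ≤ 1 - σ := by
          rw [Filter.frequently_iff]
          intro U hU
          obtain ⟨ε, hε, hsub⟩ := Metric.mem_nhdsWithin_iff.mp hU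
          obtain ⟨u, hne, hlt, hle⟩ := key ε hε
          exact ⟨u, hsub ⟨Metric.mem_ball.mpr (by rwa [Real.dist_eq]), hne⟩, hle⟩
        have hple : p ≤ 1 - σ := by
          by_contra hcon
          push_neg at hcon
          have hev2 : ∀ᶠ u in 𝓝[≠] a, 1 - σ < slope φ a u :=
            hslope.eventually (Ioi_mem_nhds hcon)
          obtain ⟨u, h1, h2⟩ := (hfreq.and_eventually hev2).exists
          linarith
        rw [abs_of_neg (by linarith : p - 1 < 0)]
        linarith
      · -- 1 < p
        have hev : ∀ᶠ u in 𝓝[≠] a, 1 < slope φ a u := hslope.eventually (Ioi_mem_nhds hpgt)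
        obtain ⟨ε₁, hε₁, hball⟩ := Metric.mem_nhdsWithin_iff.mp hev
        have hsl₁ : ∀ u : ℝ, u ≠ a → |u - a| < ε₁ → 1 < slope φ a u := fun u hne hu =>
          hball ⟨Metric.mem_ball.mpr (by rwa [Real.dist_eq]), hne⟩
        have key : ∀ ε > 0, ∃ u : ℝ, u ≠ a ∧ |u - a| < ε ∧ 1 + σ ≤ slope φ a u := by
          intro ε hε
          have hmin : 0 < min ε ε₁ := lt_min hε hε₁
          rcases hside with hRa | hLa
          · obtain ⟨y, hyC, hay, hyb⟩ := hRa (min ε ε₁) hmin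
            obtain ⟨u, v, huC, hvC, hau, huv, hvy, hlen, hgap⟩ :=
              gap_exists hclosed hsp ha hyC hay
            have hua : a < u := by
              rcases eq_or_lt_of_le hau with he | h
              · exfalso
                obtain ⟨z, hzC, hz1, hz2⟩ := hRa (v - a) (by linarith)
                exact Set.eq_empty_iff_forall_notMem.mp hgap z
                  ⟨⟨by rw [← he]; exact hz1, by linarith⟩, hzC⟩
              · exact h
            have hune : u ≠ a := ne_of_gt hua
            have hub : |u - a| < min ε ε₁ := by
              rw [abs_of_pos (by linarith)]; linarith
            have hsl := hsl₁ u hune (lt_of_lt_of_le hub (min_le_right _ _))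
            rw [slope_def_field, hfix] at hsl
            have hφu_gt : u < φ u := by
              have := (one_lt_div (by linarith : (0:ℝ) < u - a)).mp hsl
              linarith
            have hφuC := hmaps u huC
            have hge : v ≤ φ u := by
              by_contra hcon; push_neg at hcon
              exact Set.eq_empty_iff_forall_notMem.mp hgap (φ u) ⟨⟨hφu_gt, hcon⟩, hφuC⟩
            refine ⟨u, hune, lt_of_lt_of_le hub (min_le_left _ _), ?_⟩
            rw [slope_def_field, hfix, le_div_iff₀ (by linarith : (0:ℝ) < u - a)]
            have e1 : σ * (u - a) ≤ σ * (y - a) := by nlinarith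
            nlinarith
          · obtain ⟨y, hyC, hyb, hya⟩ := hLa (min ε ε₁) hmin
            obtain ⟨u, v, huC, hvC, hyu, huv, hva, hlen, hgap⟩ :=
              gap_exists hclosed hsp hyC ha hya
            have hva' : v < a := by
              rcases eq_or_lt_of_le hva with he | h
              · exfalso
                obtain ⟨z, hzC, hz1, hz2⟩ := hLa (a - u) (by linarith)
                exact Set.eq_empty_iff_forall_notMem.mp hgap z
                  ⟨⟨by linarith, by rw [he]; exact hz2⟩, hzC⟩
              · exact h
            have hvne : v ≠ a := ne_of_lt hva'
            have hvb : |v - a| < min ε ε₁ := by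
              rw [abs_of_neg (by linarith)]; linarith
            have hsl := hsl₁ v hvne (lt_of_lt_of_le hvb (min_le_right _ _))
            rw [slope_def_field, hfix] at hsl
            have hφv_lt : φ v < v := by
              have := (lt_div_iff_of_neg (by linarith : v - a < 0)).mp hsl
              linarith
            have hφvC := hmaps v hvC
            have hle : φ v ≤ u := by
              by_contra hcon; push_neg at hcon
              exact Set.eq_empty_iff_forall_notMem.mp hgap (φ v) ⟨⟨hcon, hφv_lt⟩, hφvC⟩
            refine ⟨v, hvne, lt_of_lt_of_le hvb (min_le_left _ _), ?_⟩
            rw [slope_def_field, hfix, le_div_iff_of_neg (by linarith : v - a < 0)]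
            have e1 : σ * (a - v) ≤ σ * (a - y) := by nlinarith
            nlinarith
        have hfreq : ∃ᶠ u in 𝓝[≠] a, 1 + σ ≤ slope φ a u := by
          rw [Filter.frequently_iff]
          intro U hU
          obtain ⟨ε, hε, hsub⟩ := Metric.mem_nhdsWithin_iff.mp hU
          obtain ⟨u, hne, hlt, hle⟩ := key ε hε
          exact ⟨u, hsub ⟨Metric.mem_ball.mpr (by rwa [Real.dist_eq]), hne⟩, hle⟩
        have hple : 1 + σ ≤ p := by
          by_contra hcon
          push_neg at hcon
          have hev2 : ∀ᶠ u in 𝓝[≠] a, slope φ a u < 1 + σ :=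
            hslope.eventually (Iio_mem_nhds hcon)
          obtain ⟨u, h1, h2⟩ := (hfreq.and_eventually hev2).exists
          linarith
        rw [abs_of_pos (by linarith : (0:ℝ) < p - 1)]
        linarith
    refine ⟨⟨φ, φinv, hφ.2.2.1, hφ.2.2.2⟩, hφ, hmono, hpres, hfix,
      ⟨p, hσp, ?_⟩, 1, one_ne_zero, 1, one_pos, fun x hx hxd => ?_⟩
    · have h0 := hasDerivAt_iff_isLittleO.mp hder
      have heq : (fun x : ℝ => φ x - (a + p * (x - a))) =
          (fun x' : ℝ => φ x' - φ a - (x' - a) • p) := by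
        funext t
        rw [hfix, smul_eq_mul]
        ring
      show (fun x : ℝ => φ x - (a + p * (x - a))) =o[𝓝 a] fun x : ℝ => x - a
      rw [heq]
      exact h0
    · rw [zpow_one]
      rfl
end

section
/- If C is a sparse Cantor subset of ℝ, then the group of homeomorphisms of C arising as restrictions to C of C¹ diffeomorphisms of ℝ that preserve C is countable. -/
open Set Filter Topology Asymptotics

set_option maxHeartbeats 1600000 in
lemma aux_no_right_mover (σ : ℝ) (hσ : 0 < σ) (C : Set ℝ)
    (hcomp : IsCompact C) (hsp : SparseSet σ C)
    (θ θ' : ℝ → ℝ) (R ε : ℝ) (hR : 0 < R)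
    (hd : ∀ x, HasDerivAt θ (θ' x) x)
    (hmono : StrictMono θ)
    (himg : θ '' C = C)
    (hclose : ∀ x ∈ C, |θ x - x| ≤ ε)
    (hmod : ∀ a ∈ Set.Icc (sInf C) (sSup C), ∀ b ∈ Set.Icc (sInf C) (sSup C),
      |a - b| ≤ R → |θ' a - θ' b| ≤ σ / 4)
    (hεR : ε ≤ σ * R / (8 * (σ + 3))) :
    ∀ x ∈ C, θ x ≤ x := by
  intro x hx
  by_contra hmove
  push_neg at hmove
  -- hmove : x < θ x
  have hne : C.Nonempty := ⟨x, hx⟩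
  have bddA : BddAbove C := hcomp.bddAbove
  have bddB : BddBelow C := hcomp.bddBelow
  have hCicc : ∀ c ∈ C, c ∈ Set.Icc (sInf C) (sSup C) :=
    fun c hc => ⟨csInf_le bddB hc, le_csSup bddA hc⟩
  have hθc : Continuous θ := by
    rw [continuous_iff_continuousAt]; exact fun y => (hd y).continuousAt
  have hθmem : ∀ c ∈ C, θ c ∈ C := by
    intro c hc; rw [← himg]; exact Set.mem_image_of_mem θ hc
  have hsurj : ∀ c ∈ C, ∃ w, w ∈ C ∧ θ w = c := by
    intro c hc; rw [← himg] at hc; exact hc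
  have hcompI : ∀ a b : ℝ, IsCompact (C ∩ Set.Icc a b) :=
    fun a b => hcomp.inter_right isClosed_Icc
  have hε0 : 0 < ε := by
    have := hclose x hx
    have h1 : θ x - x ≤ |θ x - x| := le_abs_self _
    linarith
  -- ε and R size facts
  have hkey : 8 * ε * (σ + 3) ≤ σ * R := by
    have h8 : (0:ℝ) < 8 * (σ + 3) := by linarith
    calc 8 * ε * (σ + 3) = ε * (8 * (σ + 3)) := by ring
    _ ≤ (σ * R / (8 * (σ + 3))) * (8 * (σ + 3)) := by
        apply mul_le_mul_of_nonneg_right hεR (le_of_lt h8)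
    _ = σ * R := by field_simp
  have hεσR : 8 * ε / σ ≤ R := by
    rw [div_le_iff₀ hσ]; nlinarith
  have hRmε : ε < R - 4 * ε / σ := by
    have : 4 * ε / σ * σ = 4 * ε := by field_simp
    nlinarith [div_nonneg (by linarith : (0:ℝ) ≤ 4 * ε) (le_of_lt hσ)]
  -- extremes are fixed
  have hmaxmem : sSup C ∈ C := hcomp.sSup_mem hne
  have hminmem : sInf C ∈ C := hcomp.sInf_mem hne
  have hmaxfix : θ (sSup C) = sSup C := by
    have h1 : θ (sSup C) ≤ sSup C := le_csSup bddA (hθmem _ hmaxmem)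
    obtain ⟨w, hw, hwe⟩ := hsurj (sSup C) hmaxmem
    have h2 : w ≤ sSup C := le_csSup bddA hw
    have h3 : θ w ≤ θ (sSup C) := hmono.monotone h2
    rw [hwe] at h3
    linarith
  have hminfix : θ (sInf C) = sInf C := by
    have h1 : sInf C ≤ θ (sInf C) := csInf_le bddB (hθmem _ hminmem)
    obtain ⟨w, hw, hwe⟩ := hsurj (sInf C) hminmem
    have h2 : sInf C ≤ w := csInf_le bddB hw
    have h3 : θ (sInf C) ≤ θ w := hmono.monotone h2
    rw [hwe] at h3
    linarith
  -- Step 1: the first non-right-moving point p above x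
  set P : Set ℝ := C ∩ {z | x ≤ z ∧ θ z ≤ z} with hPdef
  have hPcl : IsClosed {z : ℝ | x ≤ z ∧ θ z ≤ z} := by
    apply IsClosed.inter
    · exact isClosed_le continuous_const continuous_id
    · exact isClosed_le hθc continuous_id
  have hPcomp : IsCompact P := hcomp.inter_right hPcl
  have hPne : P.Nonempty := ⟨sSup C, hmaxmem, le_csSup bddA hx, le_of_eq hmaxfix⟩
  set p := sInf P with hpdef
  have hpP : p ∈ P := hPcomp.sInf_mem hPne
  obtain ⟨hpC, hxp', hθp'⟩ := hpP
  have hxp : x < p := by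
    rcases lt_or_eq_of_le hxp' with h | h
    · exact h
    · exfalso; rw [← h] at hθp'; linarith
  have hlt : ∀ z ∈ C, x ≤ z → z < p → z < θ z := by
    intro z hz hxz hzp
    by_contra h
    push_neg at h
    have : z ∈ P := ⟨hz, hxz, h⟩
    have := csInf_le hPcomp.bddBelow this
    linarith
  -- Step 2: θ p = p
  have hfixp : θ p = p := by
    have hp'C : θ p ∈ C := hθmem p hpC
    have hxθp : x < θ p := lt_of_lt_of_le hmove (hmono.monotone hxp')
    have hmem : θ p ∈ P := ⟨hp'C, le_of_lt hxθp, by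
      have := hmono.monotone hθp'
      linarith⟩
    have := csInf_le hPcomp.bddBelow hmem
    linarith
  -- Step 3: C accumulates at p from the left (within [x,p))
  have hdense : ∀ δ, 0 < δ → ∃ z, z ∈ C ∧ x ≤ z ∧ z < p ∧ p - z < δ := by
    intro δ hδ
    set E := C ∩ Set.Ico x p with hEdef
    have hEne : E.Nonempty := ⟨x, hx, le_refl x, hxp⟩
    have hEbdd : BddAbove E := hcomp.bddAbove.mono Set.inter_subset_left
    have hsub : closure E ⊆ C ∩ Set.Icc x p := by
      apply closure_minimal
      · exact Set.inter_subset_inter subset_rfl Set.Ico_subset_Icc_self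
      · exact (hcomp.isClosed).inter isClosed_Icc
    have hsupE : sSup E = p := by
      rcases hsub (csSup_mem_closure hEne hEbdd) with ⟨hc, hx1, hx2⟩
      rcases lt_or_eq_of_le hx2 with h | h
      · exfalso
        have h1 : sSup E < θ (sSup E) := hlt _ hc hx1 h
        have h2 : θ (sSup E) < p := by
          have := hmono h; rwa [hfixp] at this
        have hmem : θ (sSup E) ∈ E := ⟨hθmem _ hc, le_trans hx1 (le_of_lt h1), h2⟩
        have := le_csSup hEbdd hmem
        linarith
      · exact h
    obtain ⟨z, hzE, hzgt⟩ := exists_lt_of_lt_csSup hEne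
      (show p - δ < sSup E by rw [hsupE]; linarith)
    exact ⟨z, hzE.1, hzE.2.1, hzE.2.2, by linarith⟩
  -- gap extraction from sparseness
  have hgapnear : ∀ a b, a ∈ C → b ∈ C → a < b →
      ∃ u v, u ∈ C ∧ v ∈ C ∧ a ≤ u ∧ u < v ∧ v ≤ b ∧ σ * (b - a) ≤ v - u ∧
        (∀ c ∈ C, u < c → c < v → False) := by
    intro a b ha hb hab
    obtain ⟨α, β, hα, hαβ, hβ, hgapC, hlen⟩ := hsp a ha b hb hab
    set u := sSup (C ∩ Set.Icc a α) with hu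
    set v := sInf (C ∩ Set.Icc β b) with hv
    have huM : u ∈ C ∩ Set.Icc a α := (hcompI a α).sSup_mem ⟨a, ha, le_refl a, hα⟩
    have hvM : v ∈ C ∩ Set.Icc β b := (hcompI β b).sInf_mem ⟨b, hb, hβ, le_refl b⟩
    refine ⟨u, v, huM.1, hvM.1, huM.2.1, ?_, hvM.2.2, ?_, ?_⟩
    · calc u ≤ α := huM.2.2
        _ < β := hαβ
        _ ≤ v := hvM.2.1
    · have h1 := huM.2.2; have h2 := hvM.2.1; linarith
    · intro c hc h1 h2
      rcases le_or_gt c α with h | h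
      · have hmem : c ∈ C ∩ Set.Icc a α := ⟨hc, le_trans huM.2.1 (le_of_lt h1), h⟩
        have := le_csSup (hcompI a α).bddAbove hmem
        linarith
      rcases lt_or_ge c β with h' | h'
      · have hmem : c ∈ Set.Ioo α β ∩ C := ⟨⟨h, h'⟩, hc⟩
        rw [hgapC] at hmem
        exact hmem
      · have hmem : c ∈ C ∩ Set.Icc β b := ⟨hc, h', le_trans (le_of_lt h2) hvM.2.2⟩
        have := csInf_le (hcompI β b).bddBelow hmem
        linarith
  -- Step 4: θ' p ≤ 1 - 3σ/4
  have hθ'p : θ' p ≤ 1 - 3*σ/4 := by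
    obtain ⟨z, hz, hxz, hzp, hzR⟩ := hdense R hR
    obtain ⟨u, v, huC, hvC, hzu, huv, hvp, hlen, hgap⟩ := hgapnear z p hz hpC hzp
    have hup : u < p := lt_of_lt_of_le huv hvp
    have hθu : u < θ u := hlt u huC (le_trans hxz hzu) hup
    have hθup : θ u < p := by have := hmono hup; rwa [hfixp] at this
    have hvθu : v ≤ θ u := by
      by_contra h
      push_neg at h
      exact hgap (θ u) (hθmem u huC) hθu h
    obtain ⟨ξ, hξmem, hξslope⟩ := exists_hasDerivAt_eq_slope θ θ' hup
      hθc.continuousOn (fun y _ => hd y)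
    have hD : 0 < p - u := by linarith
    have hslope2 : θ' ξ * (p - u) = p - θ u := by
      rw [hξslope, hfixp]; field_simp
    have hθξ : θ' ξ ≤ 1 - σ := by
      have h1 : p - θ u ≤ (p - u) - σ * (p - z) := by linarith
      have h2 : σ * (p - u) ≤ σ * (p - z) := by
        apply mul_le_mul_of_nonneg_left _ (le_of_lt hσ); linarith
      nlinarith
    have hξI : ξ ∈ Set.Icc (sInf C) (sSup C) := by
      have h1 := hCicc u huC; have h2 := hCicc p hpC
      exact ⟨le_trans h1.1 (le_of_lt hξmem.1), le_trans (le_of_lt hξmem.2) h2.2⟩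
    have hmod1 := hmod ξ hξI p (hCicc p hpC) (by
      rw [abs_sub_comm, abs_of_nonneg (by linarith [hξmem.1, hξmem.2] : (0:ℝ) ≤ p - ξ)]
      linarith [hξmem.1])
    have h3 := (abs_le.mp hmod1).1
    linarith
  -- Step 5
  have hstep5 : ∀ z, z ∈ C → x ≤ z → z < p → p - z ≤ R → p - z ≤ 2*ε/σ := by
    intro z hz hxz hzp hzR
    obtain ⟨ξ, hξmem, hξslope⟩ := exists_hasDerivAt_eq_slope θ θ' hzp
      hθc.continuousOn (fun y _ => hd y)
    have hξI : ξ ∈ Set.Icc (sInf C) (sSup C) := by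
      have h1 := hCicc z hz; have h2 := hCicc p hpC
      exact ⟨le_trans h1.1 (le_of_lt hξmem.1), le_trans (le_of_lt hξmem.2) h2.2⟩
    have hmodz := hmod ξ hξI p (hCicc p hpC) (by
      rw [abs_sub_comm, abs_of_nonneg (by linarith [hξmem.1, hξmem.2] : (0:ℝ) ≤ p - ξ)]
      linarith [hξmem.1])
    have hθξ : θ' ξ ≤ 1 - σ/2 := by
      have := (abs_le.mp hmodz).2
      linarith
    have hD : 0 < p - z := by linarith
    have hsl : θ' ξ * (p - z) = p - θ z := by rw [hξslope, hfixp]; field_simp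
    have h1 : θ z - z ≤ ε := le_trans (le_abs_self _) (hclose z hz)
    have h2 : σ/2 * (p - z) ≤ θ z - z := by nlinarith
    rw [le_div_iff₀ hσ]
    nlinarith
  -- Step 6: p - x ≤ 4ε/σ
  have hpx : p - x ≤ 4*ε/σ := by
    by_contra h6
    push_neg at h6
    set t := 2*ε/σ with ht
    have hτ : (0:ℝ) < t := by rw [ht]; positivity
    have h4e : (4:ℝ)*ε/σ = 2*t := by rw [ht]; ring
    have hxle : x ≤ p - 2*t := by rw [h4e] at h6; linarith
    set E := C ∩ Set.Icc x (p - 2*t) with hE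
    have hEne : E.Nonempty := ⟨x, hx, le_refl x, hxle⟩
    set z' := sSup E with hz'
    have hz'M : z' ∈ E := (hcompI _ _).sSup_mem hEne
    have hz'p : z' < p := by have := hz'M.2.2; linarith
    have hz'R : R < p - z' := by
      by_contra h
      push_neg at h
      have h1 := hstep5 z' hz'M.1 hz'M.2.1 hz'p h
      have h2 := hz'M.2.2
      linarith
    set F := C ∩ Set.Icc (p - 2*t) p with hF
    have hFne : F.Nonempty := ⟨p, hpC, by constructor <;> linarith⟩
    set v' := sInf F with hv'
    have hv'M : v' ∈ F := (hcompI _ _).sInf_mem hFne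
    have hgap6 : ∀ c ∈ C, z' < c → c < v' → False := by
      intro c hc h1 h2
      rcases le_or_gt c (p - 2*t) with h | h
      · have hmem : c ∈ E := ⟨hc, le_trans hz'M.2.1 (le_of_lt h1), h⟩
        have := le_csSup (hcompI _ _).bddAbove hmem
        linarith
      · have hmem : c ∈ F := ⟨hc, le_of_lt h, le_trans (le_of_lt h2) hv'M.2.2⟩
        have := csInf_le (hcompI _ _).bddBelow hmem
        linarith
    have hθz' : z' < θ z' := hlt z' hz'M.1 hz'M.2.1 hz'p
    have hθz'C : θ z' ∈ C := hθmem _ hz'M.1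
    have hvθ : v' ≤ θ z' := by
      by_contra h
      push_neg at h
      exact hgap6 (θ z') hθz'C hθz' h
    have hb : θ z' - z' ≤ ε := le_trans (le_abs_self _) (hclose z' hz'M.1)
    have h1 : p - 2*t ≤ v' := hv'M.2.1
    have h2 : ε < R - 2*t := by rw [ht]; linarith [hRmε]
    linarith
  -- Step 7: the last non-left-blocked point q below x
  set Q : Set ℝ := C ∩ {z | z ≤ x ∧ θ z ≤ z} with hQdef
  have hQcl : IsClosed {z : ℝ | z ≤ x ∧ θ z ≤ z} := by
    apply IsClosed.inter
    · exact isClosed_le continuous_id continuous_const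
    · exact isClosed_le hθc continuous_id
  have hQcomp : IsCompact Q := hcomp.inter_right hQcl
  have hQne : Q.Nonempty := ⟨sInf C, hminmem, csInf_le bddB hx, le_of_eq hminfix⟩
  set q := sSup Q with hqdef
  have hqQ : q ∈ Q := hQcomp.sSup_mem hQne
  obtain ⟨hqC, hqx', hθq'⟩ := hqQ
  have hqx : q < x := by
    rcases lt_or_eq_of_le hqx' with h | h
    · exact h
    · exfalso; rw [h] at hθq'; linarith
  have hlt2 : ∀ z ∈ C, q < z → z ≤ x → z < θ z := by
    intro z hz hqz hzx
    by_contra h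
    push_neg at h
    have hmem : z ∈ Q := ⟨hz, hzx, h⟩
    have := le_csSup hQcomp.bddAbove hmem
    linarith
  have hfixq : θ q = q := by
    rcases lt_or_eq_of_le hθq' with h | h
    · exfalso
      obtain ⟨w, hw, hwe⟩ := hsurj q hqC
      have hwq : q < w := by
        have : θ q < θ w := by rw [hwe]; exact h
        exact hmono.lt_iff_lt.mp this
      rcases le_or_gt w x with h2 | h2
      · have := hlt2 w hw hwq h2
        rw [hwe] at this
        linarith
      · have : θ x < θ w := hmono h2
        rw [hwe] at this
        linarith
    · exact h
  -- Step 8: C accumulates at q from the right within (q, x]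
  have hdense2 : ∀ δ, 0 < δ → ∃ z, z ∈ C ∧ q < z ∧ z ≤ x ∧ z - q < δ := by
    intro δ hδ
    set E := C ∩ Set.Ioc q x with hEdef
    have hEne : E.Nonempty := ⟨x, hx, hqx, le_refl x⟩
    have hEbdd : BddBelow E := hcomp.bddBelow.mono Set.inter_subset_left
    have hsub : closure E ⊆ C ∩ Set.Icc q x := by
      apply closure_minimal
      · exact Set.inter_subset_inter subset_rfl Set.Ioc_subset_Icc_self
      · exact (hcomp.isClosed).inter isClosed_Icc
    have hinfE : sInf E = q := by
      rcases hsub (csInf_mem_closure hEne hEbdd) with ⟨hc, hx1, hx2⟩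
      rcases lt_or_eq_of_le hx1 with h | h
      · exfalso
        have h1 : sInf E < θ (sInf E) := hlt2 _ hc h hx2
        obtain ⟨w, hw, hwe⟩ := hsurj (sInf E) hc
        have hwlt : w < sInf E := by
          have : θ w < θ (sInf E) := by rw [hwe]; exact h1
          exact hmono.lt_iff_lt.mp this
        have hwq : q < w := by
          have : θ q < θ w := by rw [hwe, hfixq]; exact h
          exact hmono.lt_iff_lt.mp this
        have hmem : w ∈ E := ⟨hw, hwq, le_trans (le_of_lt hwlt) hx2⟩
        have := csInf_le hEbdd hmem
        linarith
      · exact h.symm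
    obtain ⟨z, hzE, hzlt⟩ := exists_lt_of_csInf_lt hEne
      (show sInf E < q + δ by rw [hinfE]; linarith)
    exact ⟨z, hzE.1, hzE.2.1, hzE.2.2, by linarith⟩
  -- Step 9: θ' q ≥ 1 + 3σ/4
  have hθ'q : 1 + 3*σ/4 ≤ θ' q := by
    obtain ⟨z, hz, hqz, hzx, hzR⟩ := hdense2 R hR
    obtain ⟨u, v, huC, hvC, hqu, huv, hvz, hlen, hgap⟩ := hgapnear q z hqC hz hqz
    have hvq : q < v := lt_of_le_of_lt hqu huv
    have hvx : v ≤ x := le_trans hvz hzx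
    have hθv : v < θ v := hlt2 v hvC hvq hvx
    obtain ⟨w, hw, hwe⟩ := hsurj v hvC
    have hwv : w < v := by
      have : θ w < θ v := by rw [hwe]; exact hθv
      exact hmono.lt_iff_lt.mp this
    have hqw : q < w := by
      have : θ q < θ w := by rw [hwe, hfixq]; exact hvq
      exact hmono.lt_iff_lt.mp this
    have hwu : w ≤ u := by
      by_contra h
      push_neg at h
      exact hgap w hw h hwv
    obtain ⟨ξ, hξmem, hξslope⟩ := exists_hasDerivAt_eq_slope θ θ' hqw
      hθc.continuousOn (fun y _ => hd y)
    have hW : 0 < w - q := by linarith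
    have hslope2 : θ' ξ * (w - q) = v - q := by
      rw [hξslope, hwe, hfixq]; field_simp
    have hVq : 0 < v - q := by linarith
    have hvq2 : σ * (v - q) ≤ σ * (z - q) := by
      apply mul_le_mul_of_nonneg_left _ (le_of_lt hσ); linarith
    have hwuq : w - q ≤ (v - q) - σ * (z - q) := by linarith
    have hθξ : 1 + σ ≤ θ' ξ := by nlinarith
    have hξI : ξ ∈ Set.Icc (sInf C) (sSup C) := by
      have h1 := hCicc q hqC; have h2 := hCicc w hw
      exact ⟨le_trans h1.1 (le_of_lt hξmem.1), le_trans (le_of_lt hξmem.2) h2.2⟩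
    have hmod1 := hmod ξ hξI q (hCicc q hqC) (by
      rw [abs_of_nonneg (by linarith [hξmem.1] : (0:ℝ) ≤ ξ - q)]
      linarith [hξmem.2])
    have h3 := (abs_le.mp hmod1).2
    linarith
  -- Step 10
  have hstep10 : ∀ z, z ∈ C → q < z → z ≤ x → z - q ≤ R → z - q ≤ 2*ε/σ := by
    intro z hz hqz hzx hzR
    obtain ⟨ξ, hξmem, hξslope⟩ := exists_hasDerivAt_eq_slope θ θ' hqz
      hθc.continuousOn (fun y _ => hd y)
    have hξI : ξ ∈ Set.Icc (sInf C) (sSup C) := by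
      have h1 := hCicc q hqC; have h2 := hCicc z hz
      exact ⟨le_trans h1.1 (le_of_lt hξmem.1), le_trans (le_of_lt hξmem.2) h2.2⟩
    have hmodz := hmod ξ hξI q (hCicc q hqC) (by
      rw [abs_of_nonneg (by linarith [hξmem.1] : (0:ℝ) ≤ ξ - q)]
      linarith [hξmem.2])
    have hθξ : 1 + σ/2 ≤ θ' ξ := by
      have := (abs_le.mp hmodz).1
      linarith
    have hD : 0 < z - q := by linarith
    have hsl : θ' ξ * (z - q) = θ z - q := by rw [hξslope, hfixq]; field_simp
    have h1 : θ z - z ≤ ε := le_trans (le_abs_self _) (hclose z hz)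
    have h2 : σ/2 * (z - q) ≤ θ z - z := by nlinarith
    rw [le_div_iff₀ hσ]
    nlinarith
  -- Step 11: x - q ≤ 4ε/σ
  have hxq : x - q ≤ 4*ε/σ := by
    by_contra h11
    push_neg at h11
    set t := 2*ε/σ with ht
    have hτ : (0:ℝ) < t := by rw [ht]; positivity
    have h4e : (4:ℝ)*ε/σ = 2*t := by rw [ht]; ring
    have hxle : q + 2*t ≤ x := by rw [h4e] at h11; linarith
    set E := C ∩ Set.Icc (q + 2*t) x with hE
    have hEne : E.Nonempty := ⟨x, hx, hxle, le_refl x⟩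
    set z' := sInf E with hz'
    have hz'M : z' ∈ E := (hcompI _ _).sInf_mem hEne
    have hqz' : q < z' := by have := hz'M.2.1; linarith
    have hz'R : R < z' - q := by
      by_contra h
      push_neg at h
      have h1 := hstep10 z' hz'M.1 hqz' hz'M.2.2 h
      have h2 := hz'M.2.1
      linarith
    set F := C ∩ Set.Icc q (q + 2*t) with hF
    have hFne : F.Nonempty := ⟨q, hqC, le_refl q, by linarith⟩
    set u' := sSup F with hu'
    have hu'M : u' ∈ F := (hcompI _ _).sSup_mem hFne
    have hgap11 : ∀ c ∈ C, u' < c → c < z' → False := by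
      intro c hc h1 h2
      rcases le_or_gt c (q + 2*t) with h | h
      · have hmem : c ∈ F := ⟨hc, le_trans hu'M.2.1 (le_of_lt h1), h⟩
        have := le_csSup (hcompI _ _).bddAbove hmem
        linarith
      · have hmem : c ∈ E := ⟨hc, le_of_lt h, le_trans (le_of_lt h2) hz'M.2.2⟩
        have := csInf_le (hcompI _ _).bddBelow hmem
        linarith
    have hθz' : z' < θ z' := hlt2 z' hz'M.1 hqz' hz'M.2.2
    obtain ⟨w, hw, hwe⟩ := hsurj z' hz'M.1
    have hwz' : w < z' := by
      have : θ w < θ z' := by rw [hwe]; exact hθz'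
      exact hmono.lt_iff_lt.mp this
    have hqw : q < w := by
      have : θ q < θ w := by rw [hwe, hfixq]; exact hqz'
      exact hmono.lt_iff_lt.mp this
    have hwu : w ≤ u' := by
      by_contra h
      push_neg at h
      exact hgap11 w hw h hwz'
    have hb : θ w - w ≤ ε := le_trans (le_abs_self _) (hclose w hw)
    have h1 : u' ≤ q + 2*t := hu'M.2.2
    have h2 : ε < R - 2*t := by rw [ht]; linarith [hRmε]
    rw [hwe] at hb
    linarith
  -- Step 12: contradiction
  have hpq : |θ' p - θ' q| ≤ σ/4 := by
    apply hmod p (hCicc p hpC) q (hCicc q hqC)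
    have h8 : 8*ε/σ ≤ R := hεσR
    have : p - q ≤ 8*ε/σ := by
      have h4 : (4:ℝ)*ε/σ + 4*ε/σ = 8*ε/σ := by ring
      linarith
    rw [abs_of_nonneg (by linarith : (0:ℝ) ≤ p - q)]
    linarith
  have := (abs_le.mp hpq).1
  linarith

lemma aux_fixes (σ : ℝ) (hσ : 0 < σ) (C : Set ℝ)
    (hcomp : IsCompact C) (hsp : SparseSet σ C)
    (θ θ' : ℝ → ℝ) (R ε : ℝ) (hR : 0 < R)
    (hd : ∀ x, HasDerivAt θ (θ' x) x)
    (hmono : StrictMono θ)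
    (himg : θ '' C = C)
    (hclose : ∀ x ∈ C, |θ x - x| ≤ ε)
    (hmod : ∀ a ∈ Set.Icc (sInf C) (sSup C), ∀ b ∈ Set.Icc (sInf C) (sSup C),
      |a - b| ≤ R → |θ' a - θ' b| ≤ σ / 4)
    (hεR : ε ≤ σ * R / (8 * (σ + 3))) :
    ∀ x ∈ C, θ x = x := by
  intro x hx
  have h1 : θ x ≤ x := aux_no_right_mover σ hσ C hcomp hsp θ θ' R ε hR hd hmono himg
    hclose hmod hεR x hx
  -- mirrored system
  have hmemneg : ∀ y : ℝ, y ∈ -C ↔ -y ∈ C := fun y => Set.mem_neg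
  have hcompn : IsCompact (-C) := hcomp.neg
  have hspn : SparseSet σ (-C) := by
    intro a ha b hb hab
    rw [hmemneg] at ha hb
    obtain ⟨α, β, h1, h2, h3, h4, h5⟩ := hsp (-b) hb (-a) ha (by linarith)
    refine ⟨-β, -α, by linarith, by linarith, by linarith, ?_, by linarith⟩
    ext c
    simp only [Set.mem_inter_iff, Set.mem_Ioo, Set.mem_empty_iff_false, iff_false]
    rintro ⟨⟨hc1, hc2⟩, hc3⟩
    rw [hmemneg] at hc3
    have : -c ∈ Set.Ioo α β ∩ C := ⟨⟨by linarith, by linarith⟩, hc3⟩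
    rw [h4] at this
    exact this
  have hdn : ∀ t, HasDerivAt (fun s => -θ (-s)) (θ' (-t)) t := by
    intro t
    have h0 : HasDerivAt (fun s : ℝ => -s) (-1) t := (hasDerivAt_id t).neg
    have h1 : HasDerivAt (fun s => θ (-s)) (θ' (-t) * (-1)) t :=
      HasDerivAt.comp t (hd (-t)) h0
    have := h1.neg
    exact (by simpa using this : HasDerivAt (-fun s => θ (-s)) (θ' (-t)) t)
  have hmonon : StrictMono (fun s => -θ (-s)) := by
    intro a b hab
    simp only [neg_lt_neg_iff]
    exact hmono (by linarith)
  have himgn : (fun s => -θ (-s)) '' (-C) = -C := by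
    ext y
    constructor
    · rintro ⟨z, hz, rfl⟩
      rw [hmemneg] at hz ⊢
      simp only [neg_neg]
      rw [← himg]
      exact Set.mem_image_of_mem θ hz
    · intro hy
      rw [hmemneg, ← himg] at hy
      obtain ⟨w, hw, hwe⟩ := hy
      refine ⟨-w, by rwa [hmemneg, neg_neg], by simp [hwe]⟩
  have hclosen : ∀ y ∈ -C, |(fun s => -θ (-s)) y - y| ≤ ε := by
    intro y hy
    rw [hmemneg] at hy
    have h := hclose (-y) hy
    rw [show (fun s => -θ (-s)) y - y = -(θ (-y) - -y) by simp; ring, abs_neg]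
    exact h
  have hIccn : ∀ a : ℝ, a ∈ Set.Icc (sInf (-C)) (sSup (-C)) →
      -a ∈ Set.Icc (sInf C) (sSup C) := by
    intro a ha
    have e1 : sInf (-C) = -sSup C := by rw [Real.sInf_def]; simp
    have e2 : sSup (-C) = -sInf C := by have := Real.sInf_def C; linarith
    rw [e1, e2] at ha
    exact ⟨by linarith [ha.2], by linarith [ha.1]⟩
  have hmodn : ∀ a ∈ Set.Icc (sInf (-C)) (sSup (-C)), ∀ b ∈ Set.Icc (sInf (-C)) (sSup (-C)),
      |a - b| ≤ R → |θ' (-a) - θ' (-b)| ≤ σ / 4 := by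
    intro a ha b hb hab
    exact hmod (-a) (hIccn a ha) (-b) (hIccn b hb) (by rw [neg_sub_neg, abs_sub_comm]; exact hab)
  have h2 := aux_no_right_mover σ hσ (-C) hcompn hspn (fun s => -θ (-s)) (fun s => θ' (-s))
    R ε hR hdn hmonon himgn hclosen hmodn hεR (-x) (by rwa [hmemneg, neg_neg])
  simp only [neg_neg] at h2
  -- h2 : -θ x ≤ -x
  linarith

-- monotone bijection of C maps [inf C, sup C] into itself
lemma maps_icc (C : Set ℝ) (hcomp : IsCompact C) (hne : C.Nonempty)
    (φ : ℝ → ℝ) (himg : φ '' C = C) (hmono : StrictMono φ ∨ StrictAnti φ) :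
    Set.MapsTo φ (Set.Icc (sInf C) (sSup C)) (Set.Icc (sInf C) (sSup C)) := by
  have bddA : BddAbove C := hcomp.bddAbove
  have bddB : BddBelow C := hcomp.bddBelow
  have hmm : sInf C ∈ C := hcomp.sInf_mem hne
  have hMM : sSup C ∈ C := hcomp.sSup_mem hne
  have hφmem : ∀ c ∈ C, φ c ∈ C := by
    intro c hc; rw [← himg]; exact Set.mem_image_of_mem φ hc
  have hsurj : ∀ c ∈ C, ∃ w ∈ C, φ w = c := by
    intro c hc; rw [← himg] at hc; exact hc
  rcases hmono with h | h
  · have hfixm : φ (sInf C) = sInf C := by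
      obtain ⟨w, hw, hwe⟩ := hsurj _ hmm
      have h1 : sInf C ≤ φ (sInf C) := csInf_le bddB (hφmem _ hmm)
      have h2 : φ (sInf C) ≤ φ w := h.monotone (csInf_le bddB hw)
      rw [hwe] at h2
      linarith
    have hfixM : φ (sSup C) = sSup C := by
      obtain ⟨w, hw, hwe⟩ := hsurj _ hMM
      have h1 : φ (sSup C) ≤ sSup C := le_csSup bddA (hφmem _ hMM)
      have h2 : φ w ≤ φ (sSup C) := h.monotone (le_csSup bddA hw)
      rw [hwe] at h2
      linarith
    intro y hy
    exact ⟨hfixm ▸ h.monotone hy.1, hfixM ▸ h.monotone hy.2⟩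
  · have hfixm : φ (sInf C) = sSup C := by
      obtain ⟨w, hw, hwe⟩ := hsurj _ hMM
      have h1 : φ (sInf C) ≤ sSup C := le_csSup bddA (hφmem _ hmm)
      have h2 : φ w ≤ φ (sInf C) := h.antitone (csInf_le bddB hw)
      rw [hwe] at h2
      linarith
    have hfixM : φ (sSup C) = sInf C := by
      obtain ⟨w, hw, hwe⟩ := hsurj _ hmm
      have h1 : sInf C ≤ φ (sSup C) := csInf_le bddB (hφmem _ hMM)
      have h2 : φ (sSup C) ≤ φ w := h.antitone (le_csSup bddA hw)
      rw [hwe] at h2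
      linarith
    intro y hy
    exact ⟨hfixM ▸ h.antitone hy.2, hfixm ▸ h.antitone hy.1⟩

lemma lip_icc (g : ℝ → ℝ) (hg : Differentiable ℝ g) (m A Mr : ℝ)
    (hb : ∀ y ∈ Set.Icc m A, |deriv g y| ≤ Mr) {x y : ℝ}
    (hx : x ∈ Set.Icc m A) (hy : y ∈ Set.Icc m A) : |g x - g y| ≤ Mr * |x - y| := by
  have := Convex.norm_image_sub_le_of_norm_deriv_le (f := g) (s := Set.Icc m A)
    (fun z _ => hg z) (fun z hz => by rw [Real.norm_eq_abs]; exact hb z hz)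
    (convex_Icc m A) hy hx
  simpa [Real.norm_eq_abs] using this

lemma class_sep (σ : ℝ) (hσ : 0 < σ) (C : Set ℝ)
    (hcomp : IsCompact C) (hne : C.Nonempty) (hsp : SparseSet σ C)
    (Mr R : ℝ) (hMr : 1 ≤ Mr) (hR : 0 < R)
    (φ₁ ψ₁ φ₂ ψ₂ : ℝ → ℝ)
    (hp₁ : IsC1DiffeoPair φ₁ ψ₁) (hp₂ : IsC1DiffeoPair φ₂ ψ₂)
    (himg₁ : φ₁ '' C = C) (himg₂ : φ₂ '' C = C)
    (hsign : ((∀ y, 0 < deriv φ₁ y) ∧ (∀ y, 0 < deriv φ₂ y)) ∨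
      ((∀ y, deriv φ₁ y < 0) ∧ (∀ y, deriv φ₂ y < 0)))
    (hb₁ : ∀ y ∈ Set.Icc (sInf C) (sSup C), |deriv φ₁ y| ≤ Mr)
    (hbψ₂ : ∀ y ∈ Set.Icc (sInf C) (sSup C), |deriv ψ₂ y| ≤ Mr)
    (hm₁ : ∀ a ∈ Set.Icc (sInf C) (sSup C), ∀ b ∈ Set.Icc (sInf C) (sSup C),
      |a - b| ≤ R → |deriv φ₁ a - deriv φ₁ b| ≤ σ / (8 * Mr))
    (hmψ₂ : ∀ a ∈ Set.Icc (sInf C) (sSup C), ∀ b ∈ Set.Icc (sInf C) (sSup C),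
      |a - b| ≤ Mr * R → |deriv ψ₂ a - deriv ψ₂ b| ≤ σ / (8 * Mr))
    (hclose : ∀ x ∈ C, |φ₁ x - φ₂ x| ≤ σ * R / (8 * (σ + 3)) / Mr) :
    ∀ x ∈ C, φ₁ x = φ₂ x := by
  have hMr0 : (0:ℝ) < Mr := by linarith
  have hd₁ : ∀ x, HasDerivAt φ₁ (deriv φ₁ x) x :=
    fun x => ((hp₁.1.differentiable one_ne_zero) x).hasDerivAt
  have hd₂ : ∀ x, HasDerivAt φ₂ (deriv φ₂ x) x :=
    fun x => ((hp₂.1.differentiable one_ne_zero) x).hasDerivAt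
  have hdψ₂ : ∀ x, HasDerivAt ψ₂ (deriv ψ₂ x) x :=
    fun x => ((hp₂.2.1.differentiable one_ne_zero) x).hasDerivAt
  have hridψ₂ : ∀ y, φ₂ (ψ₂ y) = y := hp₂.2.2.2
  have hlidψ₂ : ∀ y, ψ₂ (φ₂ y) = y := hp₂.2.2.1
  have hchain : ∀ y, deriv φ₂ (ψ₂ y) * deriv ψ₂ y = 1 := by
    intro y
    have h1 : HasDerivAt (φ₂ ∘ ψ₂) (deriv φ₂ (ψ₂ y) * deriv ψ₂ y) y :=
      HasDerivAt.comp y (hd₂ (ψ₂ y)) (hdψ₂ y)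
    have h2 : φ₂ ∘ ψ₂ = id := funext hridψ₂
    rw [h2] at h1
    exact h1.unique (hasDerivAt_id y)
  have hψ₂sign : ((∀ y, 0 < deriv φ₂ y) → ∀ y, 0 < deriv ψ₂ y) ∧
      ((∀ y, deriv φ₂ y < 0) → ∀ y, deriv ψ₂ y < 0) := by
    constructor
    · intro hp y
      have h1 := hchain y
      have h2 := hp (ψ₂ y)
      nlinarith
    · intro hp y
      have h1 := hchain y
      have h2 := hp (ψ₂ y)
      nlinarith
  set θ : ℝ → ℝ := ψ₂ ∘ φ₁ with hθdef
  set θ' : ℝ → ℝ := fun x => deriv ψ₂ (φ₁ x) * deriv φ₁ x with hθ'def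
  have hθd : ∀ x, HasDerivAt θ (θ' x) x :=
    fun x => HasDerivAt.comp x (hdψ₂ (φ₁ x)) (hd₁ x)
  have hθpos : ∀ x, 0 < θ' x := by
    intro x
    rcases hsign with ⟨h1, h2⟩ | ⟨h1, h2⟩
    · exact mul_pos (hψ₂sign.1 h2 (φ₁ x)) (h1 x)
    · exact mul_pos_of_neg_of_neg (hψ₂sign.2 h2 (φ₁ x)) (h1 x)
  have hθmono : StrictMono θ := by
    apply strictMono_of_deriv_pos
    intro x
    rw [(hθd x).deriv]
    exact hθpos x
  have himgψ₂ : ψ₂ '' C = C := by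
    conv_lhs => rw [← himg₂]
    rw [← Set.image_comp, show ψ₂ ∘ φ₂ = id from funext hlidψ₂, Set.image_id]
  have himgθ : θ '' C = C := by
    rw [hθdef, Set.image_comp, himg₁, himgψ₂]
  have hCicc : C ⊆ Set.Icc (sInf C) (sSup C) :=
    fun c hc => ⟨csInf_le hcomp.bddBelow hc, le_csSup hcomp.bddAbove hc⟩
  have hmono₁ : StrictMono φ₁ ∨ StrictAnti φ₁ := by
    rcases hsign with ⟨h1, _⟩ | ⟨h1, _⟩
    · exact Or.inl (strictMono_of_deriv_pos h1)
    · exact Or.inr (strictAnti_of_deriv_neg h1)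
  have hmaps₁ : Set.MapsTo φ₁ (Set.Icc (sInf C) (sSup C)) (Set.Icc (sInf C) (sSup C)) :=
    maps_icc C hcomp hne φ₁ himg₁ hmono₁
  have hlip₁ : ∀ {a b : ℝ}, a ∈ Set.Icc (sInf C) (sSup C) → b ∈ Set.Icc (sInf C) (sSup C) →
      |φ₁ a - φ₁ b| ≤ Mr * |a - b| :=
    fun ha hb => lip_icc φ₁ (hp₁.1.differentiable one_ne_zero) _ _ Mr hb₁ ha hb
  have hlipψ₂ : ∀ {a b : ℝ}, a ∈ Set.Icc (sInf C) (sSup C) → b ∈ Set.Icc (sInf C) (sSup C) →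
      |ψ₂ a - ψ₂ b| ≤ Mr * |a - b| :=
    fun ha hb => lip_icc ψ₂ (hp₂.2.1.differentiable one_ne_zero) _ _ Mr hbψ₂ ha hb
  have hθclose : ∀ x ∈ C, |θ x - x| ≤ σ * R / (8 * (σ + 3)) := by
    intro x hx
    have hx1 : φ₁ x ∈ C := by rw [← himg₁]; exact Set.mem_image_of_mem φ₁ hx
    have hx2 : φ₂ x ∈ C := by rw [← himg₂]; exact Set.mem_image_of_mem φ₂ hx
    have h1 : θ x - x = ψ₂ (φ₁ x) - ψ₂ (φ₂ x) := by
      simp only [hθdef, Function.comp_apply]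
      rw [hlidψ₂ x]
    rw [h1]
    calc |ψ₂ (φ₁ x) - ψ₂ (φ₂ x)| ≤ Mr * |φ₁ x - φ₂ x| :=
          hlipψ₂ (hCicc hx1) (hCicc hx2)
      _ ≤ Mr * (σ * R / (8 * (σ + 3)) / Mr) := by
          apply mul_le_mul_of_nonneg_left (hclose x hx) (le_of_lt hMr0)
      _ = σ * R / (8 * (σ + 3)) := by field_simp
  have hθmod : ∀ a ∈ Set.Icc (sInf C) (sSup C), ∀ b ∈ Set.Icc (sInf C) (sSup C),
      |a - b| ≤ R → |θ' a - θ' b| ≤ σ / 4 := by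
    intro a ha b hb hab
    have ha1 : φ₁ a ∈ Set.Icc (sInf C) (sSup C) := hmaps₁ ha
    have hb1 : φ₁ b ∈ Set.Icc (sInf C) (sSup C) := hmaps₁ hb
    have hdist : |φ₁ a - φ₁ b| ≤ Mr * R := by
      calc |φ₁ a - φ₁ b| ≤ Mr * |a - b| := hlip₁ ha hb
        _ ≤ Mr * R := mul_le_mul_of_nonneg_left hab (le_of_lt hMr0)
    have key : θ' a - θ' b = deriv ψ₂ (φ₁ a) * (deriv φ₁ a - deriv φ₁ b) +
        deriv φ₁ b * (deriv ψ₂ (φ₁ a) - deriv ψ₂ (φ₁ b)) := by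
      simp only [hθ'def]; ring
    rw [key]
    calc |deriv ψ₂ (φ₁ a) * (deriv φ₁ a - deriv φ₁ b) +
        deriv φ₁ b * (deriv ψ₂ (φ₁ a) - deriv ψ₂ (φ₁ b))|
        ≤ |deriv ψ₂ (φ₁ a) * (deriv φ₁ a - deriv φ₁ b)| +
          |deriv φ₁ b * (deriv ψ₂ (φ₁ a) - deriv ψ₂ (φ₁ b))| := abs_add_le _ _
      _ = |deriv ψ₂ (φ₁ a)| * |deriv φ₁ a - deriv φ₁ b| +
          |deriv φ₁ b| * |deriv ψ₂ (φ₁ a) - deriv ψ₂ (φ₁ b)| := by rw [abs_mul, abs_mul]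
      _ ≤ Mr * (σ / (8 * Mr)) + Mr * (σ / (8 * Mr)) := by
          apply add_le_add
          · exact mul_le_mul (hbψ₂ _ ha1) (hm₁ a ha b hb hab) (abs_nonneg _)
              (le_trans (abs_nonneg _) (hbψ₂ _ ha1))
          · exact mul_le_mul (hb₁ _ hb) (hmψ₂ _ ha1 _ hb1 hdist) (abs_nonneg _)
              (le_trans (abs_nonneg _) (hb₁ _ hb))
      _ = σ / 4 := by field_simp; ring
  have hfix := aux_fixes σ hσ C hcomp hsp θ θ' R (σ * R / (8 * (σ + 3))) hR hθd hθmono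
    himgθ hθclose hθmod le_rfl
  intro x hx
  have := hfix x hx
  have h2 : φ₂ (θ x) = φ₂ x := by rw [this]
  simp only [hθdef, Function.comp_apply] at h2
  rw [hridψ₂ (φ₁ x)] at h2
  exact h2

/-- The class of induced maps with derivative bound `M+1`, modulus window `1/(k+1)`,
and orientation `s`. -/
def ClassSet (σ : ℝ) (C : Set ℝ) (M k : ℕ) (s : Bool) : Set (C → ℝ) :=
  {f | ∃ φ ψ : ℝ → ℝ, IsC1DiffeoPair φ ψ ∧ φ '' C = C ∧ (∀ x : C, f x = φ x) ∧
    ((s = true → ∀ y, 0 < deriv φ y) ∧ (s = false → ∀ y, deriv φ y < 0)) ∧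
    (∀ y ∈ Set.Icc (sInf C) (sSup C), |deriv φ y| ≤ (M:ℝ)+1) ∧
    (∀ y ∈ Set.Icc (sInf C) (sSup C), |deriv ψ y| ≤ (M:ℝ)+1) ∧
    (∀ a ∈ Set.Icc (sInf C) (sSup C), ∀ b ∈ Set.Icc (sInf C) (sSup C),
      |a - b| ≤ 1/((k:ℝ)+1) → |deriv φ a - deriv φ b| ≤ σ/(8*((M:ℝ)+1))) ∧
    (∀ a ∈ Set.Icc (sInf C) (sSup C), ∀ b ∈ Set.Icc (sInf C) (sSup C),
      |a - b| ≤ ((M:ℝ)+1)*(1/((k:ℝ)+1)) → |deriv ψ a - deriv ψ b| ≤ σ/(8*((M:ℝ)+1)))}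

lemma classSet_sep (σ : ℝ) (hσ : 0 < σ) (C : Set ℝ)
    (hcomp : IsCompact C) (hne : C.Nonempty) (hsp : SparseSet σ C)
    (M k : ℕ) (s : Bool) (f g : C → ℝ)
    (hf : f ∈ ClassSet σ C M k s) (hg : g ∈ ClassSet σ C M k s)
    (hclose : ∀ x : C, |f x - g x| ≤ σ * (1/((k:ℝ)+1)) / (8 * (σ + 3)) / ((M:ℝ)+1)) :
    f = g := by
  obtain ⟨φ₁, ψ₁, hp₁, himg₁, hres₁, hsign₁, hb₁, hbψ₁, hm₁, hmψ₁⟩ := hf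
  obtain ⟨φ₂, ψ₂, hp₂, himg₂, hres₂, hsign₂, hb₂, hbψ₂, hm₂, hmψ₂⟩ := hg
  have hMr : (1:ℝ) ≤ (M:ℝ)+1 := by
    have : (0:ℝ) ≤ (M:ℝ) := Nat.cast_nonneg M
    linarith
  have hR : (0:ℝ) < 1/((k:ℝ)+1) := by positivity
  have hsign : ((∀ y, 0 < deriv φ₁ y) ∧ (∀ y, 0 < deriv φ₂ y)) ∨
      ((∀ y, deriv φ₁ y < 0) ∧ (∀ y, deriv φ₂ y < 0)) := by
    cases s
    · exact Or.inr ⟨hsign₁.2 rfl, hsign₂.2 rfl⟩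
    · exact Or.inl ⟨hsign₁.1 rfl, hsign₂.1 rfl⟩
  have hcl : ∀ x ∈ C, |φ₁ x - φ₂ x| ≤ σ * (1/((k:ℝ)+1)) / (8 * (σ + 3)) / ((M:ℝ)+1) := by
    intro x hx
    have h := hclose ⟨x, hx⟩
    rwa [hres₁ ⟨x,hx⟩, hres₂ ⟨x,hx⟩] at h
  have key := class_sep σ hσ C hcomp hne hsp ((M:ℝ)+1) (1/((k:ℝ)+1)) hMr hR
    φ₁ ψ₁ φ₂ ψ₂ hp₁ hp₂ himg₁ himg₂ hsign hb₁ hbψ₂ hm₁ hmψ₂ hcl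
  funext x
  rw [hres₁ x, hres₂ x]
  exact key x x.2

lemma classSet_countable (σ : ℝ) (hσ : 0 < σ) (C : Set ℝ)
    (hcomp : IsCompact C) (hne : C.Nonempty) (hsp : SparseSet σ C)
    (M k : ℕ) (s : Bool) : (ClassSet σ C M k s).Countable := by
  classical
  set Mr : ℝ := (M:ℝ)+1 with hMrdef
  have hMr0 : (0:ℝ) < Mr := by positivity
  set R : ℝ := 1/((k:ℝ)+1) with hRdef
  have hR : 0 < R := by positivity
  set δ : ℝ := σ * R / (8 * (σ + 3)) / Mr with hδdef
  have hδ : 0 < δ := by positivity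
  set r : ℝ := δ / (4 * Mr) with hrdef
  have hr : 0 < r := by positivity
  obtain ⟨t, htC, htfin, htcov⟩ := hcomp.elim_finite_subcover_image
    (fun (y : ℝ) (_ : y ∈ C) => Metric.isOpen_ball (x := y) (ε := r))
    (fun x hx => Set.mem_biUnion hx (Metric.mem_ball_self hr))
  set F : (C → ℝ) → ℝ → ℝ := fun f y => if h : y ∈ C then f ⟨y, h⟩ else 0 with hFdef
  have h8 : 0 < δ/8 := by positivity
  set ι : (C → ℝ) → (↥htfin.toFinset → ℚ) :=
    fun f y => (exists_rat_near (F f (y:ℝ)) h8).choose with hιdef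
  have hι : ∀ f (y : ↥htfin.toFinset), |F f (y:ℝ) - ((ι f y : ℚ) : ℝ)| < δ/8 :=
    fun f y => (exists_rat_near (F f (y:ℝ)) h8).choose_spec
  have hinj : Set.InjOn ι (ClassSet σ C M k s) := by
    intro f hf g hg heq
    apply classSet_sep σ hσ C hcomp hne hsp M k s f g hf hg
    intro x
    show |f x - g x| ≤ δ
    obtain ⟨y, hyt, hxy⟩ := Set.mem_iUnion₂.mp (htcov x.2)
    have hyC : y ∈ C := htC hyt
    have hymem : y ∈ htfin.toFinset := htfin.mem_toFinset.mpr hyt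
    have hdist : |(x:ℝ) - y| < r := by
      have h := Metric.mem_ball.mp hxy
      rwa [Real.dist_eq] at h
    obtain ⟨φ₁, ψ₁, hp₁, himg₁, hres₁, h_, hb₁, h_2, h_3, h_4⟩ := hf
    obtain ⟨φ₂, ψ₂, hp₂, himg₂, hres₂, g_, hb₂, g_2, g_3, g_4⟩ := hg
    have hCicc : C ⊆ Set.Icc (sInf C) (sSup C) :=
      fun c hc => ⟨csInf_le hcomp.bddBelow hc, le_csSup hcomp.bddAbove hc⟩
    have hlf : |f x - f ⟨y, hyC⟩| ≤ Mr * |(x:ℝ) - y| := by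
      rw [hres₁ x, hres₁ ⟨y, hyC⟩]
      exact lip_icc φ₁ (hp₁.1.differentiable one_ne_zero) _ _ Mr hb₁ (hCicc x.2) (hCicc hyC)
    have hlg : |g x - g ⟨y, hyC⟩| ≤ Mr * |(x:ℝ) - y| := by
      rw [hres₂ x, hres₂ ⟨y, hyC⟩]
      exact lip_icc φ₂ (hp₂.1.differentiable one_ne_zero) _ _ Mr hb₂ (hCicc x.2) (hCicc hyC)
    have hFf : F f y = f ⟨y, hyC⟩ := dif_pos hyC
    have hFg : F g y = g ⟨y, hyC⟩ := dif_pos hyC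
    have h1 := hι f ⟨y, hymem⟩
    have h2 := hι g ⟨y, hymem⟩
    have hmid : |f ⟨y,hyC⟩ - g ⟨y,hyC⟩| < δ/4 := by
      have heqy : (ι f ⟨y, hymem⟩ : ℚ) = ι g ⟨y, hymem⟩ := by rw [heq]
      rw [← hFf, ← hFg]
      calc |F f y - F g y| ≤ |F f y - ((ι f ⟨y,hymem⟩ : ℚ) : ℝ)| +
            |((ι f ⟨y,hymem⟩ : ℚ) : ℝ) - F g y| := abs_sub_le _ _ _
        _ < δ/8 + δ/8 := by
            apply add_lt_add h1
            rw [heqy, abs_sub_comm]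
            exact h2
        _ = δ/4 := by ring
    have hMrr : Mr * |(x:ℝ) - y| ≤ δ/4 := by
      have h3 : Mr * |(x:ℝ) - y| ≤ Mr * r :=
        mul_le_mul_of_nonneg_left (le_of_lt hdist) (le_of_lt hMr0)
      have h4 : Mr * r = δ/4 := by rw [hrdef]; field_simp
      exact h3.trans_eq h4
    have htri : |f x - g x| ≤ |f x - f ⟨y,hyC⟩| + |f ⟨y,hyC⟩ - g ⟨y,hyC⟩| +
        |g ⟨y,hyC⟩ - g x| := by
      have t1 := abs_sub_le (f x) (f ⟨y,hyC⟩) (g x)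
      have t2 := abs_sub_le (f ⟨y,hyC⟩) (g ⟨y,hyC⟩) (g x)
      linarith
    have hgc : |g ⟨y,hyC⟩ - g x| ≤ Mr * |(x:ℝ) - y| := by rw [abs_sub_comm]; exact hlg
    have hfin : |f x - g x| ≤ δ/4 + δ/4 + δ/4 := by
      exact htri.trans (add_le_add (add_le_add (hlf.trans hMrr) hmid.le) (hgc.trans hMrr))
    linarith
  rw [← Set.countable_coe_iff]
  have hinj2 : Function.Injective (fun f : ↥(ClassSet σ C M k s) => ι f.1) :=
    fun a b hab => Subtype.ext (hinj a.2 b.2 hab)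
  exact hinj2.countable

lemma sign_const (g : ℝ → ℝ) (hg : Continuous g) (h0 : ∀ x, g x ≠ 0) :
    (∀ x, 0 < g x) ∨ (∀ x, g x < 0) := by
  by_contra h
  push_neg at h
  obtain ⟨⟨a, ha⟩, ⟨b, hb⟩⟩ := h
  have ha' : g a < 0 := lt_of_le_of_ne ha (h0 a)
  have hb' : 0 < g b := lt_of_le_of_ne hb (Ne.symm (h0 b))
  have : (0:ℝ) ∈ Set.uIcc (g a) (g b) := Set.mem_uIcc.mpr (Or.inl ⟨ha'.le, hb'.le⟩)
  obtain ⟨c, _, hc⟩ := intermediate_value_uIcc hg.continuousOn this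
  exact h0 c hc


/-- If `C` is a sparse Cantor subset of ℝ, the group of transformations of `C`
induced by `C¹` diffeomorphisms of ℝ preserving `C` is countable. -/
theorem diff1_of_sparse_countable (σ : ℝ) (hσ : 0 < σ) (C : Set ℝ)
    (hC : IsCantorSet C) (hsp : SparseSet σ C) :
    Set.Countable {f : C → ℝ | ∃ φ ψ : ℝ → ℝ, IsC1DiffeoPair φ ψ ∧ φ '' C = C ∧
      ∀ x : C, f x = φ x} := by
  obtain ⟨hne, hcomp, hperf, htd⟩ := hC
  have hsub : {f : C → ℝ | ∃ φ ψ : ℝ → ℝ, IsC1DiffeoPair φ ψ ∧ φ '' C = C ∧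
      ∀ x : C, f x = φ x} ⊆ ⋃ (M : ℕ), ⋃ (k : ℕ), ⋃ (s : Bool), ClassSet σ C M k s := by
    rintro f ⟨φ, ψ, hpair, himg, hres⟩
    have hdφ : ∀ x, HasDerivAt φ (deriv φ x) x :=
      fun x => ((hpair.1.differentiable one_ne_zero) x).hasDerivAt
    have hdψ : ∀ x, HasDerivAt ψ (deriv ψ x) x :=
      fun x => ((hpair.2.1.differentiable one_ne_zero) x).hasDerivAt
    have hcontφ' : Continuous (deriv φ) := hpair.1.continuous_deriv le_rfl
    have hcontψ' : Continuous (deriv ψ) := hpair.2.1.continuous_deriv le_rfl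
    have hchain : ∀ x, deriv ψ (φ x) * deriv φ x = 1 := by
      intro x
      have h1 : HasDerivAt (ψ ∘ φ) (deriv ψ (φ x) * deriv φ x) x :=
        HasDerivAt.comp x (hdψ (φ x)) (hdφ x)
      rw [show ψ ∘ φ = id from funext hpair.2.2.1] at h1
      exact h1.unique (hasDerivAt_id x)
    have hφ0 : ∀ x, deriv φ x ≠ 0 := by
      intro x h
      have h2 := hchain x
      rw [h, mul_zero] at h2
      exact zero_ne_one h2
    have hsign := sign_const (deriv φ) hcontφ' hφ0
    have hKc : IsCompact (Set.Icc (sInf C) (sSup C)) := isCompact_Icc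
    obtain ⟨B1, hB1⟩ := hKc.exists_bound_of_continuousOn hcontφ'.continuousOn
    obtain ⟨B2, hB2⟩ := hKc.exists_bound_of_continuousOn hcontψ'.continuousOn
    obtain ⟨M, hM⟩ := exists_nat_ge (max B1 B2)
    have hη : 0 < σ/(8*((M:ℝ)+1)) := by positivity
    obtain ⟨d1, hd1, hmod1⟩ := Metric.uniformContinuousOn_iff.mp
      (hKc.uniformContinuousOn_of_continuous hcontφ'.continuousOn) _ hη
    obtain ⟨d2, hd2, hmod2⟩ := Metric.uniformContinuousOn_iff.mp
      (hKc.uniformContinuousOn_of_continuous hcontψ'.continuousOn) _ hη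
    obtain ⟨k, hk⟩ := exists_nat_gt (max (1/d1) (((M:ℝ)+1)/d2))
    have hk0 : (0:ℝ) < (k:ℝ)+1 := by positivity
    have hk1 : 1/((k:ℝ)+1) < d1 := by
      have h1 : 1/d1 < (k:ℝ)+1 := lt_of_le_of_lt (le_max_left _ _) (by linarith)
      rw [div_lt_iff₀ hd1] at h1
      rw [div_lt_iff₀ hk0]
      linarith [mul_comm d1 ((k:ℝ)+1)]
    have hk2 : ((M:ℝ)+1)*(1/((k:ℝ)+1)) < d2 := by
      have h1 : ((M:ℝ)+1)/d2 < (k:ℝ)+1 := lt_of_le_of_lt (le_max_right _ _) (by linarith)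
      rw [div_lt_iff₀ hd2] at h1
      rw [show ((M:ℝ)+1)*(1/((k:ℝ)+1)) = ((M:ℝ)+1)/((k:ℝ)+1) by ring, div_lt_iff₀ hk0]
      linarith [mul_comm d2 ((k:ℝ)+1)]
    have hMbound : ∀ y ∈ Set.Icc (sInf C) (sSup C), |deriv φ y| ≤ (M:ℝ)+1 := by
      intro y hy
      have := hB1 y hy
      rw [Real.norm_eq_abs] at this
      have h2 : B1 ≤ (M:ℝ) := le_trans (le_max_left _ _) hM
      linarith
    have hMboundψ : ∀ y ∈ Set.Icc (sInf C) (sSup C), |deriv ψ y| ≤ (M:ℝ)+1 := by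
      intro y hy
      have := hB2 y hy
      rw [Real.norm_eq_abs] at this
      have h2 : B2 ≤ (M:ℝ) := le_trans (le_max_right _ _) hM
      linarith
    have hmodφ : ∀ a ∈ Set.Icc (sInf C) (sSup C), ∀ b ∈ Set.Icc (sInf C) (sSup C),
        |a - b| ≤ 1/((k:ℝ)+1) → |deriv φ a - deriv φ b| ≤ σ/(8*((M:ℝ)+1)) := by
      intro a ha b hb hab
      have := hmod1 a ha b hb (by rw [Real.dist_eq]; exact lt_of_le_of_lt hab hk1)
      rw [Real.dist_eq] at this
      exact this.le
    have hmodψ : ∀ a ∈ Set.Icc (sInf C) (sSup C), ∀ b ∈ Set.Icc (sInf C) (sSup C),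
        |a - b| ≤ ((M:ℝ)+1)*(1/((k:ℝ)+1)) → |deriv ψ a - deriv ψ b| ≤ σ/(8*((M:ℝ)+1)) := by
      intro a ha b hb hab
      have := hmod2 a ha b hb (by rw [Real.dist_eq]; exact lt_of_le_of_lt hab hk2)
      rw [Real.dist_eq] at this
      exact this.le
    rcases hsign with hpos | hneg
    · refine Set.mem_iUnion.mpr ⟨M, Set.mem_iUnion.mpr ⟨k, Set.mem_iUnion.mpr ⟨true, ?_⟩⟩⟩
      exact ⟨φ, ψ, hpair, himg, hres, ⟨fun _ => hpos, fun h => by simp at h⟩,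
        hMbound, hMboundψ, hmodφ, hmodψ⟩
    · refine Set.mem_iUnion.mpr ⟨M, Set.mem_iUnion.mpr ⟨k, Set.mem_iUnion.mpr ⟨false, ?_⟩⟩⟩
      exact ⟨φ, ψ, hpair, himg, hres, ⟨fun h => by simp at h, fun _ => hneg⟩,
        hMbound, hMboundψ, hmodφ, hmodψ⟩
  exact Set.Countable.mono hsub
    (Set.countable_iUnion fun M => Set.countable_iUnion fun k =>
      Set.countable_iUnion fun s => classSet_countable σ hσ C hcomp hne hsp M k s)
end
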